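/- arXiv:1412.6635 — 2 statements merged into one kernel-verified Lean document; each statement's English description precedes it below -/
import Mathlib

section
/- In the Kingman n-coalescent, for a fixed set A ⊆ {1,...,n} with |A| = i (1 ≤ i ≤ n−1) and 1 ≤ j ≤ n−i, the probability that the branch supporting exactly the leaves in A ends at level j equals P(J_A = j) = (2j / C(n,i)) · (n−j−1)! / ((n−1)(n−2)···(n−i) · (n−j−i)!). In particular P(J_A = j) ≤ (2j/(n−1)) · 1/C(n,i). -/
open Finset

/-- A (purely topological) history of the Kingman `n`-coalescent: `c k` is the set of blocks
of the partition when `k` lineages remain; at each level `2 ≤ k ≤ n` a pair of blocks merges.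
A history is uniformly distributed among all such merging histories. -/
def IsHistory (n : ℕ) (c : ℕ → Finset (Finset (Fin n))) : Prop :=
  (∀ k, k = 0 ∨ n < k → c k = ∅) ∧
  c n = Finset.univ.image (fun i => ({i} : Finset (Fin n))) ∧
  ∀ k, 2 ≤ k → k ≤ n → ∃ B₁ ∈ c k, ∃ B₂ ∈ c k, B₁ ≠ B₂ ∧
    c (k - 1) = (c k \ {B₁, B₂}) ∪ {B₁ ∪ B₂}

/-- Probability of an event under the uniform distribution on coalescent histories. -/
noncomputable def histProb (n : ℕ) (E : (ℕ → Finset (Finset (Fin n))) → Prop) : ℝ :=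
  ({c | IsHistory n c ∧ E c}.ncard : ℝ) / ({c | IsHistory n c}.ncard : ℝ)

/-- Expectation of a functional under the uniform distribution on coalescent histories. -/
noncomputable def histExp (n : ℕ) (f : (ℕ → Finset (Finset (Fin n))) → ℝ) : ℝ :=
  (∑ᶠ c ∈ {c | IsHistory n c}, f c) / ({c | IsHistory n c}.ncard : ℝ)

/-- `KLevel A c` is the initial level of the branch supporting exactly the leaves in `A`:
the largest number of blocks `k` at which `A` is a block (`0` if `A` is never a block,
corresponding to the convention `K_A = ∞`). -/
noncomputable def KLevel {n : ℕ} (A : Finset (Fin n))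
    (c : ℕ → Finset (Finset (Fin n))) : ℕ :=
  sSup {k | A ∈ c k}

/-- `JLevel A c` is the final level of the branch supporting exactly the leaves in `A`:
the largest level `j < K_A` at which `A` is not a block (`0` if no such branch exists,
corresponding to the convention `J_A = ∞`). -/
noncomputable def JLevel {n : ℕ} (A : Finset (Fin n))
    (c : ℕ → Finset (Finset (Fin n))) : ℕ :=
  sSup {j | j < KLevel A c ∧ A ∉ c j}


open Finset

def IsGH {n : ℕ} (P : Finset (Finset (Fin n))) (c : ℕ → Finset (Finset (Fin n))) : Prop :=
  (∀ k, k = 0 ∨ P.card < k → c k = ∅) ∧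
  c P.card = P ∧
  ∀ k, 2 ≤ k → k ≤ P.card → ∃ B₁ ∈ c k, ∃ B₂ ∈ c k, B₁ ≠ B₂ ∧
    c (k - 1) = (c k \ {B₁, B₂}) ∪ {B₁ ∪ B₂}

def IsPart {n : ℕ} (P : Finset (Finset (Fin n))) : Prop :=
  (∀ B ∈ P, B.Nonempty) ∧ ∀ B ∈ P, ∀ C ∈ P, B ≠ C → Disjoint B C

def mergeP {n : ℕ} (P q : Finset (Finset (Fin n))) : Finset (Finset (Fin n)) :=
  (P \ q) ∪ {q.sup id}

def W (p : ℕ) : ℕ := ∏ m ∈ Icc 2 p, m.choose 2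

def g (a b j : ℕ) : ℕ :=
  (a + b - j - 1).choose (a - 1) * W a * (∏ m ∈ Icc (j+1) b, m.choose 2) * j * W j

variable {n : ℕ}

lemma sup_pair {B₁ B₂ : Finset (Fin n)} :
    ({B₁, B₂} : Finset (Finset (Fin n))).sup id = B₁ ∪ B₂ := by
  simp [Finset.sup_insert, Finset.sup_singleton]

lemma part_eq {P : Finset (Finset (Fin n))} (hP : IsPart P) {B C : Finset (Fin n)}
    (hB : B ∈ P) (hC : C ∈ P) {x : Fin n} (hxB : x ∈ B) (hxC : x ∈ C) : B = C := by
  by_contra h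
  exact (Finset.disjoint_left.1 (hP.2 B hB C hC h)) hxB hxC

section merge

variable {P q : Finset (Finset (Fin n))}

lemma sup_q_not_mem (hP : IsPart P) (hq : q ∈ P.powersetCard 2) : q.sup id ∉ P := by
  obtain ⟨hsub, hcard⟩ := Finset.mem_powersetCard.1 hq
  obtain ⟨B₁, B₂, hne, rfl⟩ := Finset.card_eq_two.1 hcard
  rw [sup_pair]
  intro hmem
  have hB₁ : B₁ ∈ P := hsub (by simp)
  have hB₂ : B₂ ∈ P := hsub (by simp)
  obtain ⟨x, hx⟩ := hP.1 B₂ hB₂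
  have h1 : B₁ ∪ B₂ = B₂ :=
    part_eq hP hmem hB₂ (Finset.mem_union_right _ hx) hx
  obtain ⟨y, hy⟩ := hP.1 B₁ hB₁
  have : y ∈ B₂ := h1 ▸ Finset.mem_union_left _ hy
  exact hne (part_eq hP hB₁ hB₂ hy this)

lemma sup_q_nonempty (hP : IsPart P) (hq : q ∈ P.powersetCard 2) : (q.sup id).Nonempty := by
  obtain ⟨hsub, hcard⟩ := Finset.mem_powersetCard.1 hq
  obtain ⟨B₁, B₂, hne, rfl⟩ := Finset.card_eq_two.1 hcard
  rw [sup_pair]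
  obtain ⟨x, hx⟩ := hP.1 B₁ (hsub (by simp))
  exact ⟨x, Finset.mem_union_left _ hx⟩

lemma mergeP_card (hP : IsPart P) (hq : q ∈ P.powersetCard 2) :
    (mergeP P q).card = P.card - 1 := by
  obtain ⟨hsub, hcard⟩ := Finset.mem_powersetCard.1 hq
  have hns : q.sup id ∉ P \ q := fun h => sup_q_not_mem hP hq (Finset.mem_sdiff.1 h).1
  have h2 : 2 ≤ P.card := hcard ▸ Finset.card_le_card hsub
  rw [mergeP, Finset.union_comm, ← Finset.insert_eq, Finset.card_insert_of_notMem hns,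
    Finset.card_sdiff_of_subset hsub, hcard]
  omega

lemma mergeP_isPart (hP : IsPart P) (hq : q ∈ P.powersetCard 2) : IsPart (mergeP P q) := by
  obtain ⟨hsub, hcard⟩ := Finset.mem_powersetCard.1 hq
  constructor
  · intro B hB
    rcases Finset.mem_union.1 hB with h | h
    · exact hP.1 B (Finset.mem_sdiff.1 h).1
    · rw [Finset.mem_singleton.1 h]; exact sup_q_nonempty hP hq
  · intro B hB C hC hne
    obtain ⟨Bq₁, Bq₂, hq12, hqeq⟩ := Finset.card_eq_two.1 hcard
    have hsup : q.sup id = Bq₁ ∪ Bq₂ := by rw [hqeq, sup_pair]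
    have key : ∀ D ∈ P \ q, Disjoint D (q.sup id) := by
      intro D hD
      obtain ⟨hDP, hDq⟩ := Finset.mem_sdiff.1 hD
      rw [hsup]
      refine Finset.disjoint_union_right.2 ⟨?_, ?_⟩
      · exact hP.2 D hDP Bq₁ (hsub (by rw [hqeq]; simp)) (by rintro rfl; exact hDq (by rw [hqeq]; simp))
      · exact hP.2 D hDP Bq₂ (hsub (by rw [hqeq]; simp)) (by rintro rfl; exact hDq (by rw [hqeq]; simp))
    rcases Finset.mem_union.1 hB with h1 | h1 <;> rcases Finset.mem_union.1 hC with h2 | h2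
    · exact hP.2 B (Finset.mem_sdiff.1 h1).1 C (Finset.mem_sdiff.1 h2).1 hne
    · rw [Finset.mem_singleton.1 h2]; exact key B h1
    · rw [Finset.mem_singleton.1 h1]; exact (key C h2).symm
    · rw [Finset.mem_singleton.1 h1, Finset.mem_singleton.1 h2] at hne; exact absurd rfl hne

lemma mergeP_recover (hP : IsPart P) (hq : q ∈ P.powersetCard 2) :
    P \ mergeP P q = q := by
  obtain ⟨hsub, hcard⟩ := Finset.mem_powersetCard.1 hq
  have hns := sup_q_not_mem hP hq
  ext B
  simp only [mergeP, Finset.mem_sdiff, Finset.mem_union, Finset.mem_singleton]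
  constructor
  · intro h
    by_contra hBq
    exact h.2 (Or.inl ⟨h.1, hBq⟩)
  · intro hBq
    exact ⟨hsub hBq, fun h => h.elim (fun h' => h'.2 hBq) (fun h' => hns (h' ▸ hsub hBq))⟩

lemma mergeP_eq_pair {B₁ B₂ : Finset (Fin n)} :
    mergeP P {B₁, B₂} = (P \ {B₁, B₂}) ∪ {B₁ ∪ B₂} := by
  rw [mergeP, sup_pair]

end merge
section invariants

variable {P : Finset (Finset (Fin n))} {c : ℕ → Finset (Finset (Fin n))}

lemma gh_step (hc : IsGH P c) {m : ℕ} (h1 : 1 ≤ m) (h2 : m < P.card) :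
    ∃ q ∈ (c (m+1)).powersetCard 2, c m = mergeP (c (m+1)) q := by
  obtain ⟨B₁, hB₁, B₂, hB₂, hne, heq⟩ := hc.2.2 (m+1) (by omega) (by omega)
  refine ⟨{B₁, B₂}, Finset.mem_powersetCard.2 ⟨?_, Finset.card_pair hne⟩, ?_⟩
  · intro B hB
    rcases Finset.mem_insert.1 hB with h | h
    · exact h ▸ hB₁
    · exact (Finset.mem_singleton.1 h) ▸ hB₂
  · rw [mergeP_eq_pair]
    simpa using heq

lemma gh_inv_aux (hP : IsPart P) (hc : IsGH P c) :
    ∀ d m, m + d = P.card → 1 ≤ m → IsPart (c m) ∧ (c m).card = m := by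
  intro d
  induction d with
  | zero =>
    intro m hm _
    have : m = P.card := by omega
    subst this
    rw [hc.2.1]
    exact ⟨hP, rfl⟩
  | succ d ih =>
    intro m hm h1
    obtain ⟨hpart, hcard⟩ := ih (m+1) (by omega) (by omega)
    obtain ⟨q, hq, heq⟩ := gh_step hc h1 (by omega)
    rw [heq]
    refine ⟨mergeP_isPart hpart hq, ?_⟩
    rw [mergeP_card hpart hq, hcard]
    omega

lemma gh_isPart (hP : IsPart P) (hc : IsGH P c) {m : ℕ} (h1 : 1 ≤ m) (h2 : m ≤ P.card) :
    IsPart (c m) := (gh_inv_aux hP hc (P.card - m) m (by omega) h1).1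

lemma gh_card (hP : IsPart P) (hc : IsGH P c) {m : ℕ} (h1 : 1 ≤ m) (h2 : m ≤ P.card) :
    (c m).card = m := (gh_inv_aux hP hc (P.card - m) m (by omega) h1).2

lemma gh_cover (hP : IsPart P) (hc : IsGH P c) :
    ∀ d m, 1 ≤ m → m + d ≤ P.card → ∀ B ∈ c m, ∀ x ∈ B, ∃ D ∈ c (m + d), D ⊆ B ∧ x ∈ D := by
  intro d
  induction d with
  | zero => exact fun m h1 h2 B hB x hx => ⟨B, by simpa using hB, Finset.Subset.refl _, hx⟩
  | succ d ih =>
    intro m h1 h2 B hB x hx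
    obtain ⟨D, hD, hDB, hxD⟩ := ih m h1 (by omega) B hB x hx
    obtain ⟨q, hq, heq⟩ := gh_step hc (m := m + d) (by omega) (by omega)
    rw [heq, mergeP] at hD
    rcases Finset.mem_union.1 hD with h | h
    · have : m + d + 1 = m + (d+1) := by omega
      exact ⟨D, this ▸ (Finset.mem_sdiff.1 h).1, hDB, hxD⟩
    · have hDs : D = q.sup id := Finset.mem_singleton.1 h
      subst hDs
      obtain ⟨B', hB', hxB'⟩ := Finset.mem_sup.1 hxD
      have hsub : B' ⊆ q.sup id := Finset.le_sup (f := id) hB'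
      have hq' : B' ∈ c (m + (d+1)) := by
        have : m + d + 1 = m + (d+1) := by omega
        exact this ▸ (Finset.mem_powersetCard.1 hq).1 hB'
      exact ⟨B', hq', hsub.trans hDB, hxB'⟩

lemma gh_cover_top (hP : IsPart P) (hc : IsGH P c) {m : ℕ} (h1 : 1 ≤ m) (h2 : m ≤ P.card)
    {B : Finset (Fin n)} (hB : B ∈ c m) {x : Fin n} (hx : x ∈ B) :
    ∃ D ∈ P, D ⊆ B ∧ x ∈ D := by
  obtain ⟨D, hD, h3, h4⟩ := gh_cover hP hc (P.card - m) m h1 (by omega) B hB x hx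
  rw [Nat.add_sub_cancel' h2, hc.2.1] at hD
  exact ⟨D, hD, h3, h4⟩

lemma gh_subblock (hc : IsGH P c) :
    ∀ d m, 1 ≤ m → m + d ≤ P.card → ∀ B ∈ c (m + d), ∃ C ∈ c m, B ⊆ C := by
  intro d
  induction d with
  | zero => exact fun m h1 h2 B hB => ⟨B, by simpa using hB, Finset.Subset.refl _⟩
  | succ d ih =>
    intro m h1 h2 B hB
    obtain ⟨q, hq, heq⟩ := gh_step hc (m := m + d) (by omega) (by omega)
    have hB' : B ∈ c (m + d + 1) := by rw [show m + d + 1 = m + (d+1) by omega]; exact hB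
    by_cases hBq : B ∈ q
    · have hsub : B ⊆ q.sup id := Finset.le_sup (f := id) hBq
      have hs : q.sup id ∈ c (m + d) := by
        rw [heq, mergeP]; exact Finset.mem_union_right _ (Finset.mem_singleton_self _)
      obtain ⟨C, hC, hsC⟩ := ih m h1 (by omega) _ hs
      exact ⟨C, hC, hsub.trans hsC⟩
    · have : B ∈ c (m + d) := by
        rw [heq, mergeP]; exact Finset.mem_union_left _ (Finset.mem_sdiff.2 ⟨hB', hBq⟩)
      exact ih m h1 (by omega) B this

lemma gh_interval (hP : IsPart P) (hc : IsGH P c) {A : Finset (Fin n)} {l m h : ℕ}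
    (h1 : 1 ≤ l) (hlm : l ≤ m) (hmh : m ≤ h) (hhp : h ≤ P.card)
    (hA : A.Nonempty) (hAl : A ∈ c l) (hAh : A ∈ c h) : A ∈ c m := by
  have hAh' : A ∈ c (m + (h - m)) := by rw [Nat.add_sub_cancel' hmh]; exact hAh
  obtain ⟨C, hC, hAC⟩ := gh_subblock hc (h - m) m (by omega) (by omega) A hAh'
  have hC' : C ∈ c (l + (m - l)) := by rw [Nat.add_sub_cancel' hlm]; exact hC
  obtain ⟨D, hD, hCD⟩ := gh_subblock hc (m - l) l h1 (by omega) C hC'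
  obtain ⟨x, hx⟩ := hA
  have hpl : IsPart (c l) := gh_isPart hP hc h1 (by omega)
  have hAD : A = D := part_eq hpl hAl hD hx (hCD (hAC hx))
  have : A = C := Finset.Subset.antisymm hAC (hAD ▸ hCD)
  exact this ▸ hC

lemma gh_dead (hP : IsPart P) (hc : IsGH P c) {A B : Finset (Fin n)}
    (hA : A.Nonempty) (hB : B ∈ P) (hAB : A ⊆ B) (hne : A ≠ B) : ∀ m, A ∉ c m := by
  intro m hAm
  by_cases h0 : m = 0 ∨ P.card < m
  · rw [hc.1 m h0] at hAm; exact absurd hAm (Finset.notMem_empty _)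
  · push_neg at h0
    obtain ⟨x, hx⟩ := hA
    obtain ⟨D, hD, hDA, hxD⟩ := gh_cover_top hP hc (by omega) (by omega) hAm hx
    have : D = B := part_eq hP hD hB hxD (hAB hx)
    exact hne (Finset.Subset.antisymm hAB (this ▸ hDA))

lemma gh_compat (hP : IsPart P) (hc : IsGH P c) {A : Finset (Fin n)} {m : ℕ}
    (h1 : 1 ≤ m) (h2 : m ≤ P.card) (hAm : A ∈ c m) :
    (∀ B ∈ P, B ⊆ A ∨ Disjoint B A) ∧ (∀ x ∈ A, ∃ D ∈ P, D ⊆ A ∧ x ∈ D) := by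
  have hsup : ∀ x ∈ A, ∃ D ∈ P, D ⊆ A ∧ x ∈ D := fun x hx =>
    gh_cover_top hP hc h1 h2 hAm hx
  refine ⟨?_, hsup⟩
  intro B hB
  by_cases hd : Disjoint B A
  · exact Or.inr hd
  · left
    obtain ⟨x, hxB, hxA⟩ := Finset.not_disjoint_iff.1 hd
    obtain ⟨D, hD, hDA, hxD⟩ := hsup x hxA
    exact (part_eq hP hB hD hxB hxD) ▸ hDA

lemma gh_outside_ge (hP : IsPart P) (hc : IsGH P c) {A : Finset (Fin n)} {j : ℕ}
    (h2 : j + 1 ≤ P.card) (hAm : A ∈ c (j+1)) :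
    j ≤ (P.filter (fun B => ¬ B ⊆ A)).card := by
  classical
  have hpart : IsPart (c (j+1)) := gh_isPart hP hc (by omega) h2
  have hcard : (c (j+1)).card = j + 1 := gh_card hP hc (by omega) h2
  have key : ∀ C, ∃ D, C ∈ (c (j+1)).erase A →
      (D ∈ P.filter (fun B => ¬ B ⊆ A) ∧ D ⊆ C) := by
    intro C
    by_cases hC : C ∈ (c (j+1)).erase A
    · have hC' : C ∈ c (j+1) := Finset.mem_of_mem_erase hC
      have hCA : C ≠ A := Finset.ne_of_mem_erase hC
      obtain ⟨x, hx⟩ := hpart.1 C hC'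
      obtain ⟨D, hD, hDC, hxD⟩ := gh_cover_top hP hc (by omega) h2 hC' hx
      have hdisj : Disjoint C A := hpart.2 C hC' A hAm hCA
      have hnsub : ¬ D ⊆ A := fun hsub =>
        (Finset.disjoint_left.1 hdisj) (hDC hxD) (hsub hxD)
      exact ⟨D, fun _ => ⟨Finset.mem_filter.2 ⟨hD, hnsub⟩, hDC⟩⟩
    · exact ⟨∅, fun h => absurd h hC⟩
  choose f hf using key
  have hinj : Set.InjOn f ((c (j+1)).erase A : Finset _) := by
    intro C₁ hC₁ C₂ hC₂ hfeq
    have hC₁' : C₁ ∈ (c (j+1)).erase A := Finset.mem_coe.1 hC₁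
    have hC₂' : C₂ ∈ (c (j+1)).erase A := Finset.mem_coe.1 hC₂
    obtain ⟨hf1, hs1⟩ := hf C₁ hC₁'
    obtain ⟨hf2, hs2⟩ := hf C₂ hC₂'
    obtain ⟨x, hx⟩ := hP.1 (f C₁) (Finset.mem_filter.1 hf1).1
    exact part_eq hpart (Finset.mem_of_mem_erase hC₁')
      (Finset.mem_of_mem_erase hC₂') (hs1 hx) (hs2 (hfeq ▸ hx))
  have hmaps : ∀ C ∈ (c (j+1)).erase A, f C ∈ P.filter (fun B => ¬ B ⊆ A) :=
    fun C hC => (hf C hC).1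
  have := Finset.card_le_card_of_injOn f hmaps hinj
  rwa [Finset.card_erase_of_mem hAm, hcard, Nat.add_sub_cancel] at this

end invariants
section stepcount

lemma ncard_biUnion_fin {α β : Type*} (s : Finset β) (f : β → Set α)
    (hf : ∀ b ∈ s, (f b).Finite)
    (hd : ∀ b₁ ∈ s, ∀ b₂ ∈ s, b₁ ≠ b₂ → Disjoint (f b₁) (f b₂)) :
    (⋃ b ∈ s, f b).ncard = ∑ b ∈ s, (f b).ncard := by
  classical
  induction s using Finset.cons_induction with
  | empty => simp
  | cons a s ha ih =>
    have h1 : (⋃ b ∈ Finset.cons a s ha, f b) = f a ∪ ⋃ b ∈ s, f b := by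
      ext x; simp [Finset.mem_cons]
    have hdisj : Disjoint (f a) (⋃ b ∈ s, f b) := by
      rw [Set.disjoint_iUnion₂_right]
      intro b hb
      exact hd a (Finset.mem_cons_self a s) b (Finset.mem_cons_of_mem hb)
        (fun h => ha (h ▸ hb))
    have hf2 : (⋃ b ∈ s, f b).Finite :=
      Set.Finite.biUnion s.finite_toSet (fun b hb => hf b (Finset.mem_cons_of_mem hb))
    rw [h1, Set.ncard_union_eq hdisj (hf a (Finset.mem_cons_self a s)) hf2,
      Finset.sum_cons,
      ih (fun b hb => hf b (Finset.mem_cons_of_mem hb))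
        (fun b₁ h₁ b₂ h₂ hne => hd b₁ (Finset.mem_cons_of_mem h₁) b₂ (Finset.mem_cons_of_mem h₂) hne)]

variable {n : ℕ}

def truncH (p : ℕ) (c : ℕ → Finset (Finset (Fin n))) : ℕ → Finset (Finset (Fin n)) :=
  fun k => if p ≤ k then ∅ else c k

def extH (p : ℕ) (P : Finset (Finset (Fin n))) (c : ℕ → Finset (Finset (Fin n))) :
    ℕ → Finset (Finset (Fin n)) := fun k => if k = p then P else c k

variable {P : Finset (Finset (Fin n))} {c : ℕ → Finset (Finset (Fin n))}

lemma extH_truncH (hc : IsGH P c) : extH P.card P (truncH P.card c) = c := by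
  funext k
  rcases eq_or_ne k P.card with h | h
  · simp [extH, h, hc.2.1]
  · simp only [extH, truncH, if_neg h]
    rcases le_or_gt P.card k with h2 | h2
    · rw [if_pos h2, hc.1 k (Or.inr (lt_of_le_of_ne h2 (Ne.symm h)))]
    · rw [if_neg (not_le.2 h2)]

lemma truncH_isGH (hc : IsGH P c) (hp : 2 ≤ P.card) {P' : Finset (Finset (Fin n))}
    (hP' : c (P.card - 1) = P') (hcard : P'.card = P.card - 1) :
    IsGH P' (truncH P.card c) := by
  refine ⟨?_, ?_, ?_⟩
  · intro k hk
    rcases hk with h | h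
    · subst h; simp only [truncH, if_neg (by omega : ¬ P.card ≤ 0)]
      exact hc.1 0 (Or.inl rfl)
    · rw [hcard] at h
      simp only [truncH]
      rw [if_pos (by omega)]
  · rw [hcard]
    simp only [truncH, if_neg (by omega : ¬ P.card ≤ P.card - 1)]
    exact hP'
  · intro k hk1 hk2
    rw [hcard] at hk2
    obtain ⟨B₁, hB₁, B₂, hB₂, hne, heq⟩ := hc.2.2 k hk1 (by omega)
    have e1 : truncH P.card c k = c k := by simp only [truncH]; rw [if_neg (by omega)]
    have e2 : truncH P.card c (k-1) = c (k-1) := by simp only [truncH]; rw [if_neg (by omega)]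
    rw [e1, e2]
    exact ⟨B₁, hB₁, B₂, hB₂, hne, heq⟩

lemma extH_isGH (hP : IsPart P) {q : Finset (Finset (Fin n))} (hq : q ∈ P.powersetCard 2)
    (hp : 2 ≤ P.card) {c' : ℕ → Finset (Finset (Fin n))} (hc' : IsGH (mergeP P q) c') :
    IsGH P (extH P.card P c') := by
  have hmc : (mergeP P q).card = P.card - 1 := mergeP_card hP hq
  refine ⟨?_, ?_, ?_⟩
  · intro k hk
    have hknp : k ≠ P.card := by omega
    simp only [extH, if_neg hknp]
    exact hc'.1 k (by omega)
  · simp [extH]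
  · intro k hk1 hk2
    rcases eq_or_ne k P.card with h | h
    · subst h
      obtain ⟨hsub, hcard2⟩ := Finset.mem_powersetCard.1 hq
      obtain ⟨B₁, B₂, hne, rfl⟩ := Finset.card_eq_two.1 hcard2
      refine ⟨B₁, ?_, B₂, ?_, hne, ?_⟩
      · simp only [extH, if_pos rfl]; exact hsub (by simp)
      · simp only [extH, if_pos rfl]; exact hsub (by simp)
      · have e1 : extH P.card P c' (P.card - 1) = c' (P.card - 1) := by
          simp only [extH]; rw [if_neg (by omega)]
        have e2 : c' (P.card - 1) = mergeP P {B₁, B₂} := by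
          rw [← hmc]; exact hc'.2.1
        have e0 : extH P.card P c' P.card = P := by simp [extH]
        rw [e0, e1, e2, mergeP_eq_pair]
    · have hklt : k < P.card := by omega
      obtain ⟨B₁, hB₁, B₂, hB₂, hne, heq⟩ := hc'.2.2 k hk1 (by omega)
      have e1 : extH P.card P c' k = c' k := by simp only [extH, if_neg h]
      have e2 : extH P.card P c' (k-1) = c' (k-1) := by
        simp only [extH]; rw [if_neg (by omega)]
      rw [e1, e2]
      exact ⟨B₁, hB₁, B₂, hB₂, hne, heq⟩

lemma gh_step_count (hP : IsPart P) (hp : 2 ≤ P.card)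
    (E : (ℕ → Finset (Finset (Fin n))) → Prop)
    (E' : Finset (Finset (Fin n)) → (ℕ → Finset (Finset (Fin n))) → Prop)
    (hfin : ∀ q ∈ P.powersetCard 2, {c' | IsGH (mergeP P q) c' ∧ E' q c'}.Finite)
    (hEE' : ∀ q ∈ P.powersetCard 2, ∀ c', IsGH (mergeP P q) c' →
      (E (extH P.card P c') ↔ E' q c')) :
    {c | IsGH P c ∧ E c}.Finite ∧
    {c | IsGH P c ∧ E c}.ncard
      = ∑ q ∈ P.powersetCard 2, {c' | IsGH (mergeP P q) c' ∧ E' q c'}.ncard := by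
  classical
  have key : {c | IsGH P c ∧ E c} =
      ⋃ q ∈ P.powersetCard 2, extH P.card P '' {c' | IsGH (mergeP P q) c' ∧ E' q c'} := by
    ext c
    simp only [Set.mem_setOf_eq, Set.mem_iUnion, Set.mem_image, exists_prop]
    constructor
    · rintro ⟨hc, hE⟩
      obtain ⟨q, hq, heq⟩ := gh_step hc (m := P.card - 1) (by omega) (by omega)
      have hcp : c (P.card - 1 + 1) = P := by
        rw [show P.card - 1 + 1 = P.card by omega]; exact hc.2.1
      rw [hcp] at hq heq
      have htr : IsGH (mergeP P q) (truncH P.card c) :=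
        truncH_isGH hc hp heq (mergeP_card hP hq)
      refine ⟨q, hq, truncH P.card c, ⟨htr, ?_⟩, extH_truncH hc⟩
      rw [← hEE' q hq _ htr, extH_truncH hc]
      exact hE
    · rintro ⟨q, hq, c', ⟨hc', hE'⟩, rfl⟩
      exact ⟨extH_isGH hP hq hp hc', (hEE' q hq c' hc').2 hE'⟩
  have hdisj : ∀ q₁ ∈ P.powersetCard 2, ∀ q₂ ∈ P.powersetCard 2, q₁ ≠ q₂ →
      Disjoint (extH P.card P '' {c' | IsGH (mergeP P q₁) c' ∧ E' q₁ c'})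
        (extH P.card P '' {c' | IsGH (mergeP P q₂) c' ∧ E' q₂ c'}) := by
    intro q₁ h₁ q₂ h₂ hne
    rw [Set.disjoint_left]
    rintro c ⟨c₁, ⟨hc₁, _⟩, rfl⟩ ⟨c₂, ⟨hc₂, _⟩, heq2⟩
    apply hne
    have hm1 : (mergeP P q₁).card = P.card - 1 := mergeP_card hP h₁
    have hm2 : (mergeP P q₂).card = P.card - 1 := mergeP_card hP h₂
    have e1 : extH P.card P c₁ (P.card - 1) = mergeP P q₁ := by
      simp only [extH]; rw [if_neg (by omega)]; rw [← hm1]; exact hc₁.2.1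
    have e2 : extH P.card P c₁ (P.card - 1) = mergeP P q₂ := by
      rw [← heq2]; simp only [extH]; rw [if_neg (by omega)]; rw [← hm2]; exact hc₂.2.1
    rw [← mergeP_recover hP h₁, ← mergeP_recover hP h₂, ← e1, ← e2]
  have hinj : ∀ q ∈ P.powersetCard 2,
      Set.InjOn (extH P.card P) {c' | IsGH (mergeP P q) c' ∧ E' q c'} := by
    intro q hq c₁ hc₁ c₂ hc₂ heq
    have hm : (mergeP P q).card = P.card - 1 := mergeP_card hP hq
    funext k
    rcases eq_or_ne k P.card with h | h
    · subst h
      rw [hc₁.1.1 P.card (Or.inr (by omega)), hc₂.1.1 P.card (Or.inr (by omega))]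
    · have := congrFun heq k
      simpa only [extH, if_neg h] using this
  have hfin2 : ∀ q ∈ P.powersetCard 2,
      (extH P.card P '' {c' | IsGH (mergeP P q) c' ∧ E' q c'}).Finite :=
    fun q hq => (hfin q hq).image _
  constructor
  · rw [key]
    exact Set.Finite.biUnion (P.powersetCard 2).finite_toSet hfin2
  · rw [key, ncard_biUnion_fin _ _ hfin2 hdisj]
    exact Finset.sum_congr rfl (fun q hq => Set.ncard_image_of_injOn (hinj q hq))

end stepcount
section total

variable {n : ℕ}

lemma W_one : W 1 = 1 := by
  rw [W, Finset.Icc_eq_empty (by omega), Finset.prod_empty]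

lemma W_succ {p : ℕ} (hp : 1 ≤ p) : W (p + 1) = W p * (p+1).choose 2 := by
  rw [W, W, Finset.prod_Icc_succ_top (by omega)]

lemma gh_base_eq {P : Finset (Finset (Fin n))} (hcard : P.card = 1) :
    {c | IsGH P c} = {fun k => if k = 1 then P else ∅} := by
  ext c
  simp only [Set.mem_setOf_eq, Set.mem_singleton_iff]
  constructor
  · intro hc
    funext k
    rcases eq_or_ne k 1 with h | h
    · rw [if_pos h, h, ← hcard, hc.2.1]
    · rw [if_neg h, hc.1 k (by omega)]
  · intro hc
    subst hc
    refine ⟨fun k hk => if_neg (by omega), by simp [hcard], fun k hk1 hk2 => by omega⟩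

lemma gh_total : ∀ (p : ℕ), 1 ≤ p → ∀ (P : Finset (Finset (Fin n))), IsPart P → P.card = p →
    {c | IsGH P c}.Finite ∧ {c | IsGH P c}.ncard = W p := by
  intro p
  induction p using Nat.strong_induction_on with
  | _ p ih =>
    intro hp P hP hcard
    rcases eq_or_lt_of_le hp with h1 | h1
    · rw [gh_base_eq (hcard ▸ h1.symm), ← h1, W_one]
      exact ⟨Set.finite_singleton _, Set.ncard_singleton _⟩
    · have h2 : 2 ≤ P.card := by omega
      have hfin : ∀ q ∈ P.powersetCard 2,
          {c' | IsGH (mergeP P q) c' ∧ True}.Finite := by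
        intro q hq
        simp only [and_true]
        exact (ih (p-1) (by omega) (by omega) _ (mergeP_isPart hP hq)
          (by rw [mergeP_card hP hq, hcard])).1
      have step := gh_step_count hP h2 (fun _ => True) (fun _ _ => True) hfin
        (fun q hq c' hc' => Iff.rfl)
      simp only [and_true] at step
      refine ⟨step.1, ?_⟩
      rw [step.2]
      have hval : ∀ q ∈ P.powersetCard 2, {c' | IsGH (mergeP P q) c'}.ncard = W (p-1) :=
        fun q hq => (ih (p-1) (by omega) (by omega) _ (mergeP_isPart hP hq)
          (by rw [mergeP_card hP hq, hcard])).2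
      rw [Finset.sum_congr rfl hval, Finset.sum_const, Finset.card_powersetCard, hcard,
        smul_eq_mul]
      have hW : W p = W (p-1) * p.choose 2 := by
        conv_lhs => rw [show p = (p-1)+1 by omega]
        rw [W_succ (by omega), show p - 1 + 1 = p by omega]
      rw [hW]
      ring

end total
section evzero

variable {n : ℕ} {P : Finset (Finset (Fin n))} {A : Finset (Fin n)} {j : ℕ}

lemma gh_ev_empty_incompat (hP : IsPart P) (h2 : j + 1 ≤ P.card)
    (hbad : ∃ B ∈ P, ¬ (B ⊆ A ∨ Disjoint B A)) :
    {c | IsGH P c ∧ A ∈ c (j+1) ∧ A ∉ c j} = ∅ := by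
  ext c
  simp only [Set.mem_setOf_eq, Set.mem_empty_iff_false, iff_false, not_and]
  intro hc hmem _
  obtain ⟨B, hB, hbad2⟩ := hbad
  exact hbad2 ((gh_compat hP hc (by omega) h2 hmem).1 B hB)

lemma gh_ev_empty_small (hP : IsPart P) (h2 : j + 1 ≤ P.card)
    (hsmall : (P.filter (fun B => ¬ B ⊆ A)).card < j) :
    {c | IsGH P c ∧ A ∈ c (j+1) ∧ A ∉ c j} = ∅ := by
  ext c
  simp only [Set.mem_setOf_eq, Set.mem_empty_iff_false, iff_false, not_and]
  intro hc hmem _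
  exact absurd (gh_outside_ge hP hc h2 hmem) (by omega)

lemma g_base {j : ℕ} : g 1 j j = j * W j := by
  rw [g, show 1 + j - j - 1 = 0 by omega, Nat.choose_zero_right, W_one,
    Finset.Icc_eq_empty (by omega : ¬ j + 1 ≤ j), Finset.prod_empty]
  ring

lemma g_rec {a b j : ℕ} (ha : 1 ≤ a) (hb : j ≤ b) (hj : 1 ≤ j) (hp : j + 2 ≤ a + b) :
    a.choose 2 * g (a-1) b j + b.choose 2 * (if j ≤ b - 1 then g a (b-1) j else 0)
      = g a b j := by
  have e4 : W a = W (a-1) * a.choose 2 ∨ a = 1 := by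
    rcases eq_or_lt_of_le ha with h | h
    · exact Or.inr h.symm
    · left
      conv_lhs => rw [show a = (a-1)+1 by omega]
      rw [W_succ (by omega), show a - 1 + 1 = a by omega]
  rcases eq_or_lt_of_le hb with hbj | hbj
  · -- b = j
    subst hbj
    have ha2 : 2 ≤ a := by omega
    have e4' : W a = W (a-1) * a.choose 2 := e4.resolve_right (by omega)
    rw [if_neg (by omega)]
    have e1 : g (a-1) j j = (a-2).choose (a-2) * W (a-1) *
        (∏ m ∈ Finset.Icc (j+1) j, m.choose 2) * j * W j := by
      rw [g, show a - 1 + j - j - 1 = a - 2 by omega, show a - 1 - 1 = a - 2 by omega]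
    have e3 : g a j j = (a-1).choose (a-1) * W a *
        (∏ m ∈ Finset.Icc (j+1) j, m.choose 2) * j * W j := by
      rw [g, show a + j - j - 1 = a - 1 by omega]
    rw [e1, e3, e4', Nat.choose_self, Nat.choose_self]
    ring
  · -- b ≥ j + 1
    have hbj1 : j + 1 ≤ b := hbj
    rw [if_pos (by omega)]
    have hprod : (∏ m ∈ Finset.Icc (j+1) b, m.choose 2)
        = (∏ m ∈ Finset.Icc (j+1) (b-1), m.choose 2) * b.choose 2 := by
      conv_lhs => rw [show b = (b - 1) + 1 by omega]
      rw [Finset.prod_Icc_succ_top (by omega), show b - 1 + 1 = b by omega]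
    rcases eq_or_lt_of_le ha with ha1 | ha2
    · -- a = 1
      subst ha1
      rw [show Nat.choose 1 2 = 0 by decide, zero_mul, zero_add]
      rw [g, g, show 1 + (b-1) - j - 1 = b - 1 - j by omega,
        show 1 + b - j - 1 = b - j by omega, show (1:ℕ) - 1 = 0 by rfl,
        Nat.choose_zero_right, Nat.choose_zero_right, W_one, hprod]
      ring
    · -- a ≥ 2
      have ha2' : 2 ≤ a := ha2
      have e4' : W a = W (a-1) * a.choose 2 := e4.resolve_right (by omega)
      have e1 : g (a-1) b j = (a+b-j-2).choose (a-2) * W (a-1) *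
          (∏ m ∈ Finset.Icc (j+1) b, m.choose 2) * j * W j := by
        rw [g, show a - 1 + b - j - 1 = a + b - j - 2 by omega,
          show a - 1 - 1 = a - 2 by omega]
      have e2 : g a (b-1) j = (a+b-j-2).choose (a-1) * W a *
          (∏ m ∈ Finset.Icc (j+1) (b-1), m.choose 2) * j * W j := by
        rw [g, show a + (b-1) - j - 1 = a + b - j - 2 by omega]
      have e3 : g a b j = ((a+b-j-2).choose (a-2) + (a+b-j-2).choose (a-1)) * W a *
          (∏ m ∈ Finset.Icc (j+1) b, m.choose 2) * j * W j := by
        rw [g, show a + b - j - 1 = (a+b-j-2)+1 by omega,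
          show a - 1 = (a-2)+1 by omega, Nat.choose_succ_succ',
          show a - 2 + 1 = a - 1 by omega]
      rw [e1, e2, e3, e4', hprod]
      ring

end evzero
section mergefilter

variable {n : ℕ} {P q : Finset (Finset (Fin n))} {A : Finset (Fin n)}

lemma card_sdiff_union_single {α : Type*} [DecidableEq α] {s q : Finset α}
    (hq : q ⊆ s) (hqc : q.card = 2) {x : α} (hx : x ∉ s) :
    ((s \ q) ∪ {x}).card = s.card - 1 := by
  have h2 : 2 ≤ s.card := hqc ▸ Finset.card_le_card hq
  have hxs : x ∉ s \ q := fun h => hx (Finset.mem_sdiff.1 h).1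
  rw [Finset.union_comm, ← Finset.insert_eq, Finset.card_insert_of_notMem hxs,
    Finset.card_sdiff_of_subset hq, hqc]
  omega

lemma disjoint_sup_A (hdis : ∀ B ∈ q, Disjoint B A) : Disjoint (q.sup id) A := by
  rw [Finset.disjoint_left]
  intro x hx hxA
  obtain ⟨B, hB, hxB⟩ := Finset.mem_sup.1 hx
  exact (Finset.disjoint_left.1 (hdis B hB)) hxB hxA

lemma insideF_merge_inside (hP : IsPart P) (hq : q ∈ P.powersetCard 2)
    (hqI : q ⊆ P.filter (fun B => B ⊆ A)) :
    (mergeP P q).filter (fun B => B ⊆ A)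
      = ((P.filter (fun B => B ⊆ A)) \ q) ∪ {q.sup id} ∧
    (mergeP P q).filter (fun B => ¬ B ⊆ A) = P.filter (fun B => ¬ B ⊆ A) := by
  have hsupA : q.sup id ⊆ A :=
    Finset.sup_le (fun B hB => (Finset.mem_filter.1 (hqI hB)).2)
  constructor
  · ext B
    simp only [mergeP, Finset.mem_filter, Finset.mem_union, Finset.mem_sdiff,
      Finset.mem_singleton]
    constructor
    · rintro ⟨h | h, hBA⟩
      · exact Or.inl ⟨⟨h.1, hBA⟩, h.2⟩
      · exact Or.inr h
    · rintro (⟨⟨hBP, hBA⟩, hBq⟩ | h)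
      · exact ⟨Or.inl ⟨hBP, hBq⟩, hBA⟩
      · exact ⟨Or.inr h, h ▸ hsupA⟩
  · ext B
    simp only [mergeP, Finset.mem_filter, Finset.mem_union, Finset.mem_sdiff,
      Finset.mem_singleton]
    constructor
    · rintro ⟨h | h, hBA⟩
      · exact ⟨h.1, hBA⟩
      · exact absurd (h ▸ hsupA) hBA
    · rintro ⟨hBP, hBA⟩
      have hBq : B ∉ q := fun h => hBA (Finset.mem_filter.1 (hqI h)).2
      exact ⟨Or.inl ⟨hBP, hBq⟩, hBA⟩

lemma insideF_merge_outside (hP : IsPart P) (hq : q ∈ P.powersetCard 2)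
    (hcompat : ∀ B ∈ P, B ⊆ A ∨ Disjoint B A) (hA : A.Nonempty)
    (hqO : q ⊆ P.filter (fun B => ¬ B ⊆ A)) :
    (mergeP P q).filter (fun B => B ⊆ A) = P.filter (fun B => B ⊆ A) ∧
    (mergeP P q).filter (fun B => ¬ B ⊆ A)
      = ((P.filter (fun B => ¬ B ⊆ A)) \ q) ∪ {q.sup id} := by
  have hdis : ∀ B ∈ q, Disjoint B A := by
    intro B hB
    have h1 := Finset.mem_filter.1 (hqO hB)
    exact (hcompat B h1.1).resolve_left h1.2
  have hsup : Disjoint (q.sup id) A := disjoint_sup_A hdis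
  have hsupne : (q.sup id).Nonempty := sup_q_nonempty hP hq
  have hsupnA : ¬ q.sup id ⊆ A := by
    intro h
    obtain ⟨x, hx⟩ := hsupne
    exact (Finset.disjoint_left.1 hsup) hx (h hx)
  constructor
  · ext B
    simp only [mergeP, Finset.mem_filter, Finset.mem_union, Finset.mem_sdiff,
      Finset.mem_singleton]
    constructor
    · rintro ⟨h | h, hBA⟩
      · exact ⟨h.1, hBA⟩
      · exact absurd (h ▸ hBA) hsupnA
    · rintro ⟨hBP, hBA⟩
      have hBq : B ∉ q := fun h => (Finset.mem_filter.1 (hqO h)).2 hBA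
      exact ⟨Or.inl ⟨hBP, hBq⟩, hBA⟩
  · ext B
    simp only [mergeP, Finset.mem_filter, Finset.mem_union, Finset.mem_sdiff,
      Finset.mem_singleton]
    constructor
    · rintro ⟨h | h, hBA⟩
      · exact Or.inl ⟨⟨h.1, hBA⟩, h.2⟩
      · exact Or.inr h
    · rintro (⟨⟨hBP, hBA⟩, hBq⟩ | h)
      · exact ⟨Or.inl ⟨hBP, hBq⟩, hBA⟩
      · exact ⟨Or.inr h, h ▸ hsupnA⟩

end mergefilter
section evcount

variable {n : ℕ}

lemma gh_evcount (A : Finset (Fin n)) (hA : A.Nonempty) (j : ℕ) (hj : 1 ≤ j) :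
    ∀ p : ℕ, ∀ P : Finset (Finset (Fin n)), IsPart P → P.card = p → j + 1 ≤ p →
    (∀ B ∈ P, B ⊆ A ∨ Disjoint B A) →
    (∀ x ∈ A, ∃ D ∈ P, D ⊆ A ∧ x ∈ D) →
    1 ≤ (P.filter (fun B => B ⊆ A)).card →
    j ≤ (P.filter (fun B => ¬ B ⊆ A)).card →
    {c | IsGH P c ∧ A ∈ c (j+1) ∧ A ∉ c j}.Finite ∧
    {c | IsGH P c ∧ A ∈ c (j+1) ∧ A ∉ c j}.ncard
      = g (P.filter (fun B => B ⊆ A)).card (P.filter (fun B => ¬ B ⊆ A)).card j := by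
  intro p
  induction p using Nat.strong_induction_on with
  | _ p ih =>
  intro P hP hcard hjp hcompat hsup ha hb
  classical
  have hab : (P.filter (fun B => B ⊆ A)).card + (P.filter (fun B => ¬ B ⊆ A)).card = p :=
    hcard ▸ Finset.card_filter_add_card_filter_not _
  have h2 : 2 ≤ P.card := by omega
  rcases eq_or_lt_of_le hjp with hbase | hstep
  · -- BASE CASE : p = j + 1
    have hacard : (P.filter (fun B => B ⊆ A)).card = 1 := by omega
    have hbcard : (P.filter (fun B => ¬ B ⊆ A)).card = j := by omega
    have hAP : A ∈ P := by
      obtain ⟨B, hB⟩ := Finset.card_eq_one.1 hacard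
      have hBI : B ∈ P.filter (fun B => B ⊆ A) := hB ▸ Finset.mem_singleton_self B
      have hBsub : B ⊆ A := (Finset.mem_filter.1 hBI).2
      have hAB : A ⊆ B := by
        intro x hx
        obtain ⟨D, hD, hDA, hxD⟩ := hsup x hx
        have hDI : D ∈ P.filter (fun B => B ⊆ A) := Finset.mem_filter.2 ⟨hD, hDA⟩
        rw [hB, Finset.mem_singleton] at hDI
        exact hDI ▸ hxD
      exact (Finset.Subset.antisymm hAB hBsub) ▸ (Finset.mem_filter.1 hBI).1
    have hset : ∀ q : Finset (Finset (Fin n)), A ∈ q →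
        {c' | IsGH (mergeP P q) c' ∧ A ∈ q} = {c' | IsGH (mergeP P q) c'} := by
      intro q hAq; ext c'; simp [hAq]
    have hset2 : ∀ q : Finset (Finset (Fin n)), A ∉ q →
        {c' | IsGH (mergeP P q) c' ∧ A ∈ q} = ∅ := by
      intro q hAq; ext c'; simp [hAq]
    have hfin : ∀ q ∈ P.powersetCard 2, {c' | IsGH (mergeP P q) c' ∧ A ∈ q}.Finite := by
      intro q hq
      by_cases hAq : A ∈ q
      · rw [hset q hAq]
        exact (gh_total (p-1) (by omega) _ (mergeP_isPart hP hq)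
          (by rw [mergeP_card hP hq, hcard])).1
      · rw [hset2 q hAq]; exact Set.finite_empty
    have hEE' : ∀ q ∈ P.powersetCard 2, ∀ c', IsGH (mergeP P q) c' →
        ((A ∈ extH P.card P c' (j+1) ∧ A ∉ extH P.card P c' j) ↔ A ∈ q) := by
      intro q hq c' hc'
      have hmc : (mergeP P q).card = P.card - 1 := mergeP_card hP hq
      have ej1 : extH P.card P c' (j+1) = P := by
        simp only [extH]; rw [if_pos (by omega)]
      have ej : extH P.card P c' j = c' j := by
        simp only [extH]; rw [if_neg (by omega)]
      rw [ej1, ej]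
      constructor
      · rintro ⟨-, hnot⟩
        by_contra hAq
        apply hnot
        have hAM : A ∈ mergeP P q := Finset.mem_union_left _ (Finset.mem_sdiff.2 ⟨hAP, hAq⟩)
        have hcj : c' ((mergeP P q).card) = mergeP P q := hc'.2.1
        rw [hmc, hcard, show p - 1 = j by omega] at hcj
        rw [hcj]
        exact hAM
      · intro hAq
        refine ⟨hAP, ?_⟩
        have hsub : A ⊆ q.sup id := Finset.le_sup (f := id) hAq
        have hne : A ≠ q.sup id := fun h => sup_q_not_mem hP hq (h ▸ hAP)
        have hsupM : q.sup id ∈ mergeP P q :=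
          Finset.mem_union_right _ (Finset.mem_singleton_self _)
        exact gh_dead (mergeP_isPart hP hq) hc' hA hsupM hsub hne j
    obtain ⟨hfin2, hcount⟩ := gh_step_count hP h2
      (fun c => A ∈ c (j+1) ∧ A ∉ c j) (fun q _ => A ∈ q) hfin hEE'
    have hfin2' : {c | IsGH P c ∧ A ∈ c (j+1) ∧ A ∉ c j}.Finite := hfin2
    have hcount' : {c | IsGH P c ∧ A ∈ c (j+1) ∧ A ∉ c j}.ncard
        = ∑ q ∈ P.powersetCard 2, {c' | IsGH (mergeP P q) c' ∧ A ∈ q}.ncard := hcount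
    clear hfin2 hcount
    refine ⟨hfin2', ?_⟩
    rw [hcount']
    have hval : ∀ q ∈ P.powersetCard 2,
        {c' | IsGH (mergeP P q) c' ∧ A ∈ q}.ncard = if A ∈ q then W j else 0 := by
      intro q hq
      have hpj : p - 1 = j := by rw [← hbase, Nat.add_sub_cancel]
      by_cases hAq : A ∈ q
      · have hmc : (mergeP P q).card = p - 1 := by rw [mergeP_card hP hq, hcard]
        have htot := (gh_total (p-1) (by rw [hpj]; exact hj) (mergeP P q)
          (mergeP_isPart hP hq) hmc).2
        rw [if_pos hAq, hset q hAq, htot, hpj]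
      · rw [if_neg hAq, hset2 q hAq, Set.ncard_empty]
    rw [Finset.sum_congr rfl hval, ← Finset.sum_filter]
    have hfc : ((P.powersetCard 2).filter (fun q => A ∈ q)).card = j := by
      have himg : (P.powersetCard 2).filter (fun q => A ∈ q)
          = (P.erase A).image (fun B => ({A, B} : Finset (Finset (Fin n)))) := by
        ext q
        simp only [Finset.mem_filter, Finset.mem_powersetCard, Finset.mem_image,
          Finset.mem_erase]
        constructor
        · rintro ⟨⟨hqP, hqc⟩, hAq⟩
          obtain ⟨B₁, B₂, hne, rfl⟩ := Finset.card_eq_two.1 hqc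
          rcases Finset.mem_insert.1 hAq with h | h
          · exact ⟨B₂, ⟨fun hh => hne (by rw [← h, hh]), hqP (by simp)⟩, by rw [h]⟩
          · have h' : A = B₂ := Finset.mem_singleton.1 h
            exact ⟨B₁, ⟨fun hh => hne (by rw [hh, h']), hqP (by simp)⟩,
              by rw [h', Finset.pair_comm]⟩
        · rintro ⟨B, ⟨hBA, hBP⟩, rfl⟩
          refine ⟨⟨Finset.insert_subset_iff.2 ⟨hAP, Finset.singleton_subset_iff.2 hBP⟩,
            Finset.card_pair (fun h => hBA h.symm)⟩, by simp⟩
      have hinj : Set.InjOn (fun B => ({A, B} : Finset (Finset (Fin n)))) (P.erase A) := by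
        intro B₁ h₁ B₂ h₂ heq
        have hB₁A : B₁ ≠ A := (Finset.mem_erase.1 (Finset.mem_coe.1 h₁)).1
        have hB₂A : B₂ ≠ A := (Finset.mem_erase.1 (Finset.mem_coe.1 h₂)).1
        have heq' : ({A, B₁} : Finset (Finset (Fin n))) = {A, B₂} := heq
        have h3 : ({A, B₁} : Finset (Finset (Fin n))).erase A
            = ({A, B₂} : Finset (Finset (Fin n))).erase A := by rw [heq']
        rw [Finset.erase_insert (Finset.notMem_singleton.2 (Ne.symm hB₁A)),
          Finset.erase_insert (Finset.notMem_singleton.2 (Ne.symm hB₂A))] at h3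
        exact Finset.singleton_injective h3
      rw [himg, Finset.card_image_of_injOn hinj, Finset.card_erase_of_mem hAP, hcard,
        ← hbase, Nat.add_sub_cancel]
    rw [Finset.sum_const, hfc, hacard, hbcard, g_base, smul_eq_mul]
  · -- STEP CASE : j + 1 < p
    have hp2 : j + 2 ≤ (P.filter (fun B => B ⊆ A)).card
        + (P.filter (fun B => ¬ B ⊆ A)).card := by omega
    have hENE : ∀ q ∈ P.powersetCard 2, ∀ c', IsGH (mergeP P q) c' →
        ((A ∈ extH P.card P c' (j+1) ∧ A ∉ extH P.card P c' j)
          ↔ (A ∈ c' (j+1) ∧ A ∉ c' j)) := by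
      intro q hq c' hc'
      have e1 : extH P.card P c' (j+1) = c' (j+1) := by
        simp only [extH]; rw [if_neg (by omega)]
      have e2 : extH P.card P c' j = c' j := by
        simp only [extH]; rw [if_neg (by omega)]
      rw [e1, e2]
    have hfin : ∀ q ∈ P.powersetCard 2,
        {c' | IsGH (mergeP P q) c' ∧ A ∈ c' (j+1) ∧ A ∉ c' j}.Finite := by
      intro q hq
      exact Set.Finite.subset (gh_total (p-1) (by omega) (mergeP P q)
        (mergeP_isPart hP hq) (by rw [mergeP_card hP hq, hcard])).1 (fun c' hc' => hc'.1)
    have hvalI : ∀ q ∈ P.powersetCard 2, q ⊆ P.filter (fun B => B ⊆ A) →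
        {c' | IsGH (mergeP P q) c' ∧ A ∈ c' (j+1) ∧ A ∉ c' j}.ncard
          = g ((P.filter (fun B => B ⊆ A)).card - 1)
              ((P.filter (fun B => ¬ B ⊆ A)).card) j := by
      intro q hq hqI
      obtain ⟨hIM, hOM⟩ := insideF_merge_inside hP hq hqI
      have hq2 : q.card = 2 := (Finset.mem_powersetCard.1 hq).2
      have ha2 : 2 ≤ (P.filter (fun B => B ⊆ A)).card := hq2 ▸ Finset.card_le_card hqI
      have hMcard : (mergeP P q).card = p - 1 := by rw [mergeP_card hP hq, hcard]
      have hIcard : ((mergeP P q).filter (fun B => B ⊆ A)).card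
          = (P.filter (fun B => B ⊆ A)).card - 1 := by
        rw [hIM]
        exact card_sdiff_union_single hqI hq2
          (fun h => sup_q_not_mem hP hq (Finset.mem_filter.1 h).1)
      have hcompatM : ∀ B ∈ mergeP P q, B ⊆ A ∨ Disjoint B A := by
        intro B hB
        rcases Finset.mem_union.1 hB with h | h
        · exact hcompat B (Finset.mem_sdiff.1 h).1
        · left
          rw [Finset.mem_singleton.1 h]
          exact Finset.sup_le (fun C hC => (Finset.mem_filter.1 (hqI hC)).2)
      have hsupM : ∀ x ∈ A, ∃ D ∈ mergeP P q, D ⊆ A ∧ x ∈ D := by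
        intro x hx
        obtain ⟨D, hD, hDA, hxD⟩ := hsup x hx
        by_cases hDq : D ∈ q
        · refine ⟨q.sup id, Finset.mem_union_right _ (Finset.mem_singleton_self _), ?_, ?_⟩
          · exact Finset.sup_le (fun C hC => (Finset.mem_filter.1 (hqI hC)).2)
          · exact (Finset.le_sup (f := id) hDq) hxD
        · exact ⟨D, Finset.mem_union_left _ (Finset.mem_sdiff.2 ⟨hD, hDq⟩), hDA, hxD⟩
      have hih := (ih (p-1) (by omega) (mergeP P q) (mergeP_isPart hP hq) hMcard (by omega)
        hcompatM hsupM (by rw [hIcard]; omega) (by rw [hOM]; exact hb)).2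
      rw [hih, hIcard, hOM]
    have hvalO : ∀ q ∈ P.powersetCard 2, q ⊆ P.filter (fun B => ¬ B ⊆ A) →
        {c' | IsGH (mergeP P q) c' ∧ A ∈ c' (j+1) ∧ A ∉ c' j}.ncard
          = (if j ≤ (P.filter (fun B => ¬ B ⊆ A)).card - 1
              then g ((P.filter (fun B => B ⊆ A)).card)
                ((P.filter (fun B => ¬ B ⊆ A)).card - 1) j else 0) := by
      intro q hq hqO
      obtain ⟨hIM, hOM⟩ := insideF_merge_outside hP hq hcompat hA hqO
      have hq2 : q.card = 2 := (Finset.mem_powersetCard.1 hq).2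
      have hb2 : 2 ≤ (P.filter (fun B => ¬ B ⊆ A)).card := hq2 ▸ Finset.card_le_card hqO
      have hMcard : (mergeP P q).card = p - 1 := by rw [mergeP_card hP hq, hcard]
      have hOcard : ((mergeP P q).filter (fun B => ¬ B ⊆ A)).card
          = (P.filter (fun B => ¬ B ⊆ A)).card - 1 := by
        rw [hOM]
        exact card_sdiff_union_single hqO hq2
          (fun h => sup_q_not_mem hP hq (Finset.mem_filter.1 h).1)
      have hdis : ∀ B ∈ q, Disjoint B A := by
        intro B hB
        have h1 := Finset.mem_filter.1 (hqO hB)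
        exact (hcompat B h1.1).resolve_left h1.2
      have hcompatM : ∀ B ∈ mergeP P q, B ⊆ A ∨ Disjoint B A := by
        intro B hB
        rcases Finset.mem_union.1 hB with h | h
        · exact hcompat B (Finset.mem_sdiff.1 h).1
        · right
          rw [Finset.mem_singleton.1 h]
          exact disjoint_sup_A hdis
      have hsupM : ∀ x ∈ A, ∃ D ∈ mergeP P q, D ⊆ A ∧ x ∈ D := by
        intro x hx
        obtain ⟨D, hD, hDA, hxD⟩ := hsup x hx
        have hDq : D ∉ q := fun h => (Finset.mem_filter.1 (hqO h)).2 hDA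
        exact ⟨D, Finset.mem_union_left _ (Finset.mem_sdiff.2 ⟨hD, hDq⟩), hDA, hxD⟩
      by_cases hjb : j ≤ (P.filter (fun B => ¬ B ⊆ A)).card - 1
      · rw [if_pos hjb]
        have hih := (ih (p-1) (by omega) (mergeP P q) (mergeP_isPart hP hq) hMcard (by omega)
          hcompatM hsupM (by rw [hIM]; exact ha) (by rw [hOcard]; exact hjb)).2
        rw [hih, hIM, hOcard]
      · rw [if_neg hjb]
        have hsmall : ((mergeP P q).filter (fun B => ¬ B ⊆ A)).card < j := by
          rw [hOcard]; omega
        rw [gh_ev_empty_small (mergeP_isPart hP hq) (by rw [hMcard]; omega) hsmall,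
          Set.ncard_empty]
    have hvalM : ∀ q ∈ P.powersetCard 2, ¬ q ⊆ P.filter (fun B => B ⊆ A) →
        ¬ q ⊆ P.filter (fun B => ¬ B ⊆ A) →
        {c' | IsGH (mergeP P q) c' ∧ A ∈ c' (j+1) ∧ A ∉ c' j}.ncard = 0 := by
      intro q hq h1 h2x
      obtain ⟨B₂, hB₂q, hB₂nI⟩ := Finset.not_subset.1 h1
      obtain ⟨B₁, hB₁q, hB₁nO⟩ := Finset.not_subset.1 h2x
      have hB₂P : B₂ ∈ P := (Finset.mem_powersetCard.1 hq).1 hB₂q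
      have hB₁P : B₁ ∈ P := (Finset.mem_powersetCard.1 hq).1 hB₁q
      have hB₁A : B₁ ⊆ A := by
        by_contra h
        exact hB₁nO (Finset.mem_filter.2 ⟨hB₁P, h⟩)
      have hB₂A : ¬ B₂ ⊆ A := fun h => hB₂nI (Finset.mem_filter.2 ⟨hB₂P, h⟩)
      have hbad : ¬ ((q.sup id) ⊆ A ∨ Disjoint (q.sup id) A) := by
        rintro (h | h)
        · exact hB₂A ((Finset.le_sup (f := id) hB₂q).trans h)
        · obtain ⟨x, hx⟩ := hP.1 B₁ hB₁P
          exact (Finset.disjoint_left.1 h) ((Finset.le_sup (f := id) hB₁q) hx) (hB₁A hx)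
      rw [gh_ev_empty_incompat (mergeP_isPart hP hq)
        (by rw [mergeP_card hP hq, hcard]; omega)
        ⟨q.sup id, Finset.mem_union_right _ (Finset.mem_singleton_self _), hbad⟩,
        Set.ncard_empty]
    have hfilterI : (P.powersetCard 2).filter (fun q => q ⊆ P.filter (fun B => B ⊆ A))
        = (P.filter (fun B => B ⊆ A)).powersetCard 2 := by
      ext q
      simp only [Finset.mem_filter, Finset.mem_powersetCard]
      constructor
      · rintro ⟨⟨hqP, hqc⟩, hsub⟩
        exact ⟨hsub, hqc⟩
      · rintro ⟨hsub, hqc⟩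
        exact ⟨⟨hsub.trans (Finset.filter_subset _ _), hqc⟩, hsub⟩
    have hfilterO : ((P.powersetCard 2).filter
          (fun q => ¬ q ⊆ P.filter (fun B => B ⊆ A))).filter
          (fun q => q ⊆ P.filter (fun B => ¬ B ⊆ A))
        = (P.filter (fun B => ¬ B ⊆ A)).powersetCard 2 := by
      ext q
      simp only [Finset.mem_filter, Finset.mem_powersetCard]
      constructor
      · rintro ⟨⟨⟨hqP, hqc⟩, hnI⟩, hsub⟩
        exact ⟨hsub, hqc⟩
      · rintro ⟨hsub, hqc⟩
        refine ⟨⟨⟨hsub.trans (Finset.filter_subset _ _), hqc⟩, ?_⟩, hsub⟩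
        intro hsubI
        obtain ⟨B, hB⟩ := Finset.card_pos.1 (by rw [hqc]; norm_num : 0 < q.card)
        exact (Finset.mem_filter.1 (hsub hB)).2 (Finset.mem_filter.1 (hsubI hB)).2
    obtain ⟨hfin2, hcount⟩ := gh_step_count hP h2
      (fun c => A ∈ c (j+1) ∧ A ∉ c j) (fun _ c' => A ∈ c' (j+1) ∧ A ∉ c' j) hfin hENE
    have hfin2' : {c | IsGH P c ∧ A ∈ c (j+1) ∧ A ∉ c j}.Finite := hfin2
    have hcount' : {c | IsGH P c ∧ A ∈ c (j+1) ∧ A ∉ c j}.ncard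
        = ∑ q ∈ P.powersetCard 2,
            {c' | IsGH (mergeP P q) c' ∧ A ∈ c' (j+1) ∧ A ∉ c' j}.ncard := hcount
    clear hfin2 hcount
    refine ⟨hfin2', ?_⟩
    rw [hcount']
    have hsummand : ∀ q ∈ P.powersetCard 2,
        {c' | IsGH (mergeP P q) c' ∧ A ∈ c' (j+1) ∧ A ∉ c' j}.ncard
          = (if q ⊆ P.filter (fun B => B ⊆ A)
              then g ((P.filter (fun B => B ⊆ A)).card - 1)
                ((P.filter (fun B => ¬ B ⊆ A)).card) j
              else if q ⊆ P.filter (fun B => ¬ B ⊆ A)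
                then (if j ≤ (P.filter (fun B => ¬ B ⊆ A)).card - 1
                  then g ((P.filter (fun B => B ⊆ A)).card)
                    ((P.filter (fun B => ¬ B ⊆ A)).card - 1) j else 0)
                else 0) := by
      intro q hq
      by_cases h1 : q ⊆ P.filter (fun B => B ⊆ A)
      · rw [if_pos h1]
        exact hvalI q hq h1
      · rw [if_neg h1]
        by_cases h2x : q ⊆ P.filter (fun B => ¬ B ⊆ A)
        · rw [if_pos h2x]
          exact hvalO q hq h2x
        · rw [if_neg h2x]
          exact hvalM q hq h1 h2x
    rw [Finset.sum_congr rfl hsummand,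
      ← Finset.sum_filter_add_sum_filter_not (P.powersetCard 2)
        (fun q => q ⊆ P.filter (fun B => B ⊆ A))]
    have hs1 : ∑ q ∈ (P.powersetCard 2).filter (fun q => q ⊆ P.filter (fun B => B ⊆ A)),
        (if q ⊆ P.filter (fun B => B ⊆ A)
          then g ((P.filter (fun B => B ⊆ A)).card - 1)
            ((P.filter (fun B => ¬ B ⊆ A)).card) j
          else if q ⊆ P.filter (fun B => ¬ B ⊆ A)
            then (if j ≤ (P.filter (fun B => ¬ B ⊆ A)).card - 1
              then g ((P.filter (fun B => B ⊆ A)).card)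
                ((P.filter (fun B => ¬ B ⊆ A)).card - 1) j else 0)
            else 0)
        = ((P.filter (fun B => B ⊆ A)).card.choose 2) *
            g ((P.filter (fun B => B ⊆ A)).card - 1)
              ((P.filter (fun B => ¬ B ⊆ A)).card) j := by
      rw [Finset.sum_congr rfl (fun q hq => if_pos (Finset.mem_filter.1 hq).2),
        Finset.sum_const, hfilterI, Finset.card_powersetCard, smul_eq_mul]
    have hs2 : ∑ q ∈ (P.powersetCard 2).filter (fun q => ¬ q ⊆ P.filter (fun B => B ⊆ A)),
        (if q ⊆ P.filter (fun B => B ⊆ A)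
          then g ((P.filter (fun B => B ⊆ A)).card - 1)
            ((P.filter (fun B => ¬ B ⊆ A)).card) j
          else if q ⊆ P.filter (fun B => ¬ B ⊆ A)
            then (if j ≤ (P.filter (fun B => ¬ B ⊆ A)).card - 1
              then g ((P.filter (fun B => B ⊆ A)).card)
                ((P.filter (fun B => ¬ B ⊆ A)).card - 1) j else 0)
            else 0)
        = ((P.filter (fun B => ¬ B ⊆ A)).card.choose 2) *
            (if j ≤ (P.filter (fun B => ¬ B ⊆ A)).card - 1
              then g ((P.filter (fun B => B ⊆ A)).card)
                ((P.filter (fun B => ¬ B ⊆ A)).card - 1) j else 0) := by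
      rw [Finset.sum_congr rfl (fun q hq => if_neg (Finset.mem_filter.1 hq).2),
        ← Finset.sum_filter, hfilterO, Finset.sum_const, Finset.card_powersetCard,
        smul_eq_mul]
    rw [hs1, hs2]
    exact g_rec ha hb hj hp2

end evcount
section jlevel

variable {n : ℕ}

def P0 (n : ℕ) : Finset (Finset (Fin n)) :=
  Finset.univ.image (fun i => ({i} : Finset (Fin n)))

lemma P0_card : (P0 n).card = n := by
  rw [P0, Finset.card_image_of_injective _ Finset.singleton_injective]
  simp

lemma P0_isPart : IsPart (P0 n) := by
  constructor
  · intro B hB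
    obtain ⟨x, -, rfl⟩ := Finset.mem_image.1 hB
    exact ⟨x, Finset.mem_singleton_self x⟩
  · intro B hB C hC hne
    obtain ⟨x, -, rfl⟩ := Finset.mem_image.1 hB
    obtain ⟨y, -, rfl⟩ := Finset.mem_image.1 hC
    rw [Finset.disjoint_left]
    intro a ha hb
    rw [Finset.mem_singleton] at ha hb
    exact hne (by rw [← ha, hb])

lemma isHistory_iff {c : ℕ → Finset (Finset (Fin n))} : IsHistory n c ↔ IsGH (P0 n) c := by
  rw [IsHistory, IsGH, P0_card]
  rfl

lemma jlevel_iff {A : Finset (Fin n)} (hA : A.Nonempty) {j : ℕ} (hj : 1 ≤ j)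
    (hjn : j + 1 ≤ n) {c : ℕ → Finset (Finset (Fin n))} (hc : IsHistory n c) :
    JLevel A c = j ↔ (A ∈ c (j+1) ∧ A ∉ c j) := by
  have hGH : IsGH (P0 n) c := isHistory_iff.1 hc
  have hbdd : ∀ k, A ∈ c k → 1 ≤ k ∧ k ≤ n := by
    intro k hk
    by_contra h
    rw [hc.1 k (by omega)] at hk
    exact absurd hk (Finset.notMem_empty _)
  have hKbdd : BddAbove {k | A ∈ c k} := ⟨n, fun k hk => (hbdd k hk).2⟩
  constructor
  · rintro hJ
    have hSne : {m | m < KLevel A c ∧ A ∉ c m}.Nonempty := by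
      by_contra h
      rw [Set.not_nonempty_iff_eq_empty] at h
      rw [JLevel, h, csSup_empty] at hJ
      simp at hJ
      omega
    have hSbdd : BddAbove {m | m < KLevel A c ∧ A ∉ c m} :=
      ⟨KLevel A c, fun m hm => le_of_lt hm.1⟩
    have hjmem : j ∈ {m | m < KLevel A c ∧ A ∉ c m} := hJ ▸ Nat.sSup_mem hSne hSbdd
    obtain ⟨hjK, hjA⟩ := hjmem
    refine ⟨?_, hjA⟩
    have hKne : {k | A ∈ c k}.Nonempty := by
      by_contra h
      rw [Set.not_nonempty_iff_eq_empty] at h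
      have : KLevel A c = 0 := by rw [KLevel, h, csSup_empty]; rfl
      omega
    have hK_mem : A ∈ c (KLevel A c) := Nat.sSup_mem hKne hKbdd
    rcases eq_or_lt_of_le (show j + 1 ≤ KLevel A c by omega) with h | h
    · exact h ▸ hK_mem
    · by_contra hnotin
      have hmem : j + 1 ∈ {m | m < KLevel A c ∧ A ∉ c m} := ⟨h, hnotin⟩
      have := le_csSup hSbdd hmem
      rw [JLevel] at hJ
      omega
  · rintro ⟨h1, h2⟩
    have hK_ge : j + 1 ≤ KLevel A c := le_csSup hKbdd h1
    have hK_mem : A ∈ c (KLevel A c) := Nat.sSup_mem ⟨j+1, h1⟩ hKbdd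
    have hK_le : KLevel A c ≤ n := (hbdd _ hK_mem).2
    have hSsub : ∀ m ∈ {m | m < KLevel A c ∧ A ∉ c m}, m ≤ j := by
      rintro m ⟨hmK, hmA⟩
      by_contra hmj
      have hm1 : j + 1 ≤ m := by omega
      have : A ∈ c m := by
        apply gh_interval P0_isPart hGH (l := j+1) (h := KLevel A c) (by omega) hm1
          (by omega) (by rw [P0_card]; exact hK_le) hA h1 hK_mem
      exact hmA this
    have hjS : j ∈ {m | m < KLevel A c ∧ A ∉ c m} := ⟨by omega, h2⟩
    exact le_antisymm (csSup_le ⟨j, hjS⟩ hSsub) (le_csSup ⟨j, hSsub⟩ hjS)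

lemma P0_filter_card {A : Finset (Fin n)} :
    ((P0 n).filter (fun B => B ⊆ A)).card = A.card := by
  have himg : (P0 n).filter (fun B => B ⊆ A) = A.image (fun x => ({x} : Finset (Fin n))) := by
    ext B
    simp only [P0, Finset.mem_filter, Finset.mem_image]
    constructor
    · rintro ⟨⟨x, -, rfl⟩, hsub⟩
      exact ⟨x, hsub (Finset.mem_singleton_self x), rfl⟩
    · rintro ⟨x, hx, rfl⟩
      exact ⟨⟨x, Finset.mem_univ x, rfl⟩, Finset.singleton_subset_iff.2 hx⟩
  rw [himg, Finset.card_image_of_injective _ Finset.singleton_injective]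

end jlevel
section arith

lemma W_pos (p : ℕ) : 0 < W p :=
  Finset.prod_pos (fun m hm => Nat.choose_pos (by
    have := (Finset.mem_Icc.1 hm).1; omega))

lemma cast_choose_two : ∀ r : ℕ, (((r+1).choose 2 : ℕ) : ℝ) = (r+1) * r / 2 := by
  intro r
  induction r with
  | zero => simp
  | succ s ihs =>
    rw [show s + 1 + 1 = (s+1)+1 from rfl, Nat.choose_succ_succ' (s+1) 1,
      Nat.choose_one_right]
    push_cast [ihs]
    ring

lemma W_cast : ∀ r : ℕ, 1 ≤ r →
    (W r : ℝ) * 2^(r-1) = (r.factorial : ℝ) * ((r-1).factorial : ℝ) := by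
  intro r
  induction r with
  | zero => omega
  | succ s ihs =>
    intro _
    rcases Nat.eq_zero_or_pos s with h | h
    · subst h
      simp [W_one]
    · have ihs' := ihs h
      rw [W_succ h, show s + 1 - 1 = s by omega, Nat.factorial_succ]
      have e2 : (((s+1).choose 2 : ℕ) : ℝ) = (s+1) * s / 2 := cast_choose_two s
      have e3 : (2:ℝ)^s = 2^(s-1) * 2 := by
        rw [← pow_succ]; congr 1; omega
      have e4 : (s.factorial : ℝ) = s * ((s-1).factorial : ℝ) := by
        conv_lhs => rw [show s = (s-1)+1 by omega]
        rw [Nat.factorial_succ]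
        push_cast
        rw [Nat.cast_sub (by omega : 1 ≤ s)]
        ring
      push_cast [e2, e3]
      linear_combination ((s:ℝ)+1) * s * ihs' - ((s:ℝ)+1) * (s.factorial:ℝ) * e4

lemma desc_prod (N : ℕ) : ∀ i : ℕ, i ≤ N →
    (∏ m ∈ Finset.range i, ((N:ℝ) - m)) * ((N - i).factorial : ℝ) = (N.factorial : ℝ) := by
  intro i
  induction i with
  | zero => simp
  | succ s ihs =>
    intro h
    have ihs' := ihs (by omega)
    rw [Finset.prod_range_succ]
    have e1 : ((N - s).factorial : ℝ) = ((N:ℝ) - s) * ((N - (s+1)).factorial : ℝ) := by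
      rw [show N - s = (N - (s+1)) + 1 by omega, Nat.factorial_succ, Nat.cast_mul]
      congr 1
      rw [Nat.cast_add, Nat.cast_sub (by omega : s+1 ≤ N)]
      push_cast
      ring
    rw [mul_assoc, ← e1]
    exact ihs'

lemma final_val {n i j : ℕ} (hi : 1 ≤ i) (hin : i ≤ n - 1) (hj : 1 ≤ j) (hjn : j ≤ n - i) :
    (g i (n - i) j : ℝ) / (W n : ℝ)
      = (2 * j / (n.choose i : ℝ)) *
        ((Nat.factorial (n - j - 1) : ℝ) /
          ((∏ m ∈ Finset.range i, ((n : ℝ) - 1 - m)) * (Nat.factorial (n - j - i) : ℝ))) := by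
  have hn2 : 2 ≤ n := by omega
  have hni1 : 1 ≤ n - i := by omega
  -- Step A : split g
  have hg : g i (n-i) j = j * ((n-j-1).choose (i-1)) * (W i * W (n-i)) := by
    rw [g, show i + (n - i) - j - 1 = n - j - 1 by omega]
    have hWsplit : W j * (∏ m ∈ Finset.Icc (j+1) (n-i), m.choose 2) = W (n-i) := by
      have h1 : W j = ∏ m ∈ Finset.Ioc 1 j, m.choose 2 := by
        rw [W]; congr 1
      have h2 : (∏ m ∈ Finset.Icc (j+1) (n-i), m.choose 2)
          = ∏ m ∈ Finset.Ioc j (n-i), m.choose 2 := by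
        congr 1; exact Finset.Icc_add_one_left_eq_Ioc j (n-i)
      have h3 : W (n-i) = ∏ m ∈ Finset.Ioc 1 (n-i), m.choose 2 := by
        rw [W]; congr 1
      rw [h1, h2, h3]
      exact Finset.prod_Ioc_consecutive _ (by omega) (by omega)
    have hre : (n-j-1).choose (i-1) * W i * (∏ m ∈ Finset.Icc (j+1) (n-i), m.choose 2)
          * j * W j
        = j * ((n-j-1).choose (i-1))
          * (W i * (W j * (∏ m ∈ Finset.Icc (j+1) (n-i), m.choose 2))) := by ring
    rw [hre, hWsplit]
  -- Step B : real identities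
  have hWi := W_cast i hi
  have hWni := W_cast (n-i) hni1
  have hWn := W_cast n (by omega)
  have hCjn : (((n-j-1).choose (i-1) : ℕ) : ℝ) * (((i-1).factorial : ℕ) : ℝ)
      * (((n-j-i).factorial : ℕ) : ℝ) = (((n-j-1).factorial : ℕ) : ℝ) := by
    have h := Nat.choose_mul_factorial_mul_factorial (show i-1 ≤ n-j-1 by omega)
    rw [show n-j-1-(i-1) = n-j-i by omega] at h
    exact_mod_cast h
  have hCni : ((n.choose i : ℕ) : ℝ) * ((i.factorial : ℕ) : ℝ)
      * (((n-i).factorial : ℕ) : ℝ) = ((n.factorial : ℕ) : ℝ) := by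
    exact_mod_cast Nat.choose_mul_factorial_mul_factorial (show i ≤ n by omega)
  have hD : (∏ m ∈ Finset.range i, ((n:ℝ) - 1 - m)) * (((n-1-i).factorial : ℕ) : ℝ)
      = (((n-1).factorial : ℕ) : ℝ) := by
    have h0 : ∀ m ∈ Finset.range i, (n:ℝ)-1-m = ((n-1:ℕ):ℝ) - m := by
      intro m hm
      rw [Nat.cast_sub (by omega : 1 ≤ n)]
      push_cast
      ring
    rw [Finset.prod_congr rfl h0]
    exact desc_prod (n-1) i hin
  -- positivity
  have pf : ∀ m : ℕ, (0:ℝ) < m.factorial := fun m => by exact_mod_cast m.factorial_pos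
  have hCnipos : (0:ℝ) < (n.choose i : ℕ) := by exact_mod_cast Nat.choose_pos (show i ≤ n by omega)
  have hWnpos : (0:ℝ) < (W n : ℕ) := by exact_mod_cast W_pos n
  have hDpos : (0:ℝ) < ∏ m ∈ Finset.range i, ((n:ℝ) - 1 - m) := by
    apply Finset.prod_pos
    intro m hm
    have hm' : m < i := Finset.mem_range.1 hm
    have : (m:ℝ) + 2 ≤ n := by exact_mod_cast (show m + 2 ≤ n by omega)
    linarith
  have h2pos : ∀ k : ℕ, (0:ℝ) < 2^k := fun k => by positivity
  -- explicit division forms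
  have hWn' : ((W n : ℕ) : ℝ)
      = (n.factorial : ℝ) * ((n-1).factorial : ℝ) / (2^(i-1) * 2^(n-i-1) * 2) := by
    rw [eq_div_iff (by positivity)]
    have hpow : (2:ℝ)^(i-1) * 2^(n-i-1) * 2 = 2^(n-1) := by
      rw [← pow_add, ← pow_succ, show (i-1) + (n-i-1) + 1 = n - 1 by omega]
    rw [hpow]
    exact hWn
  have hWi' : ((W i : ℕ) : ℝ) = (i.factorial : ℝ) * ((i-1).factorial : ℝ) / 2^(i-1) := by
    rw [eq_div_iff (by positivity)]
    exact hWi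
  have hWni' : ((W (n-i) : ℕ) : ℝ)
      = ((n-i).factorial : ℝ) * ((n-i-1).factorial : ℝ) / 2^(n-i-1) := by
    rw [eq_div_iff (by positivity)]
    exact hWni
  have hCjn' : (((n-j-1).choose (i-1) : ℕ) : ℝ)
      = ((n-j-1).factorial : ℝ) / (((i-1).factorial : ℝ) * ((n-j-i).factorial : ℝ)) := by
    rw [eq_div_iff (by positivity)]
    linear_combination hCjn
  have hCni' : ((n.choose i : ℕ) : ℝ)
      = (n.factorial : ℝ) / ((i.factorial : ℝ) * ((n-i).factorial : ℝ)) := by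
    rw [eq_div_iff (by positivity)]
    linear_combination hCni
  have hD' : (∏ m ∈ Finset.range i, ((n:ℝ) - 1 - m))
      = ((n-1).factorial : ℝ) / (((n-i-1).factorial : ℕ) : ℝ) := by
    rw [eq_div_iff (by positivity)]
    rw [show n - i - 1 = n - 1 - i by omega]
    exact hD
  rw [hg]
  push_cast
  rw [hCjn', hWi', hWni', hWn', hCni', hD']
  have ne1 : (i.factorial:ℝ) ≠ 0 := ne_of_gt (pf i)
  have ne2 : ((i-1).factorial:ℝ) ≠ 0 := ne_of_gt (pf _)
  have ne3 : ((n-i).factorial:ℝ) ≠ 0 := ne_of_gt (pf _)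
  have ne4 : ((n-i-1).factorial:ℝ) ≠ 0 := ne_of_gt (pf _)
  have ne5 : ((n-j-1).factorial:ℝ) ≠ 0 := ne_of_gt (pf _)
  have ne6 : ((n-j-i).factorial:ℝ) ≠ 0 := ne_of_gt (pf _)
  have ne7 : (n.factorial:ℝ) ≠ 0 := ne_of_gt (pf _)
  have ne8 : ((n-1).factorial:ℝ) ≠ 0 := ne_of_gt (pf _)
  have ne9 : (2:ℝ)^(i-1) ≠ 0 := ne_of_gt (h2pos _)
  have ne10 : (2:ℝ)^(n-i-1) ≠ 0 := ne_of_gt (h2pos _)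
  field_simp
end arith
section finale

lemma final_ineq {n i j : ℕ} (hi : 1 ≤ i) (hin : i ≤ n - 1) (hj : 1 ≤ j) (hjn : j ≤ n - i) :
    (2 * j / (n.choose i : ℝ)) *
        ((Nat.factorial (n - j - 1) : ℝ) /
          ((∏ m ∈ Finset.range i, ((n : ℝ) - 1 - m)) * (Nat.factorial (n - j - i) : ℝ)))
      ≤ (2 * j / ((n : ℝ) - 1)) * (1 / (n.choose i : ℝ)) := by
  have hn2 : 2 ≤ n := by omega
  have pf : ∀ m : ℕ, (0:ℝ) < m.factorial := fun m => by exact_mod_cast m.factorial_pos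
  have hDpos : (0:ℝ) < ∏ m ∈ Finset.range i, ((n:ℝ) - 1 - m) := by
    apply Finset.prod_pos
    intro m hm
    have hm' : m < i := Finset.mem_range.1 hm
    have : (m:ℝ) + 2 ≤ n := by exact_mod_cast (show m + 2 ≤ n by omega)
    linarith
  have hn1pos : (0:ℝ) < (n:ℝ) - 1 := by
    have : (2:ℝ) ≤ n := by exact_mod_cast hn2
    linarith
  have hE : (∏ m ∈ Finset.range (i-1), ((n:ℝ) - ↑j - 1 - m))
      * ((n-j-i).factorial : ℝ) = ((n-j-1).factorial : ℝ) := by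
    have h0 : ∀ m ∈ Finset.range (i-1), (n:ℝ) - ↑j - 1 - m = ((n-j-1:ℕ):ℝ) - m := by
      intro m hm
      rw [show n - j - 1 = n - (j+1) by omega, Nat.cast_sub (by omega : j+1 ≤ n)]
      push_cast
      ring
    rw [Finset.prod_congr rfl h0, show n - j - i = (n - j - 1) - (i-1) by omega]
    exact desc_prod (n-j-1) (i-1) (by omega)
  have hD2 : (∏ m ∈ Finset.range i, ((n:ℝ) - 1 - m))
      = ((n:ℝ) - 1) * ∏ m ∈ Finset.range (i-1), ((n:ℝ) - 2 - m) := by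
    conv_lhs => rw [show i = (i-1)+1 by omega]
    rw [Finset.prod_range_succ' (fun m => (n:ℝ) - 1 - m) (i-1)]
    have h0 : ∀ m ∈ Finset.range (i-1), (n:ℝ) - 1 - ((m+1 : ℕ) : ℝ) = (n:ℝ) - 2 - m := by
      intro m hm
      push_cast
      ring
    rw [Finset.prod_congr rfl h0]
    push_cast
    ring
  have hEE' : (∏ m ∈ Finset.range (i-1), ((n:ℝ) - ↑j - 1 - m))
      ≤ ∏ m ∈ Finset.range (i-1), ((n:ℝ) - 2 - m) := by
    apply Finset.prod_le_prod
    · intro m hm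
      have hm' : m < i - 1 := Finset.mem_range.1 hm
      have : (m:ℝ) + j + 1 ≤ n := by exact_mod_cast (show m + j + 1 ≤ n by omega)
      linarith
    · intro m hm
      have : (1:ℝ) ≤ j := by exact_mod_cast hj
      linarith
  have hkey : ((n-j-1).factorial : ℝ) /
      ((∏ m ∈ Finset.range i, ((n:ℝ) - 1 - m)) * ((n-j-i).factorial : ℝ))
      ≤ 1 / ((n:ℝ) - 1) := by
    rw [div_le_div_iff₀ (by positivity) hn1pos]
    rw [← hE, hD2]
    have hf2 : (0:ℝ) ≤ ((n-j-i).factorial : ℝ) := le_of_lt (pf _)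
    have h1 := mul_le_mul_of_nonneg_left hEE' (mul_nonneg (le_of_lt hn1pos) hf2)
    nlinarith [h1]
  have hcoeff : (0:ℝ) ≤ 2 * j / (n.choose i : ℝ) := by positivity
  calc (2 * j / (n.choose i : ℝ)) *
        ((Nat.factorial (n - j - 1) : ℝ) /
          ((∏ m ∈ Finset.range i, ((n : ℝ) - 1 - m)) * (Nat.factorial (n - j - i) : ℝ)))
      ≤ (2 * j / (n.choose i : ℝ)) * (1 / ((n:ℝ) - 1)) :=
        mul_le_mul_of_nonneg_left hkey hcoeff
    _ = (2 * j / ((n : ℝ) - 1)) * (1 / (n.choose i : ℝ)) := by ring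

end finale

/-- Distribution of the final level `J_A` in the Kingman `n`-coalescent:
`P(J_A = j) = (2j / C(n,i)) · (n−j−1)! / ((n−1)⋯(n−i) · (n−j−i)!)`, and in particular
`P(J_A = j) ≤ (2j/(n−1)) · 1/C(n,i)`. -/
theorem stmt5 (n i j : ℕ) (A : Finset (Fin n)) (hA : A.card = i)
    (hi : 1 ≤ i) (hin : i ≤ n - 1) (hj : 1 ≤ j) (hjn : j ≤ n - i) :
    histProb n (fun c => JLevel A c = j) =
      (2 * j / (n.choose i : ℝ)) *
        ((Nat.factorial (n - j - 1) : ℝ) /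
          ((∏ m ∈ Finset.range i, ((n : ℝ) - 1 - m)) *
            (Nat.factorial (n - j - i) : ℝ))) ∧
    histProb n (fun c => JLevel A c = j) ≤
      (2 * j / ((n : ℝ) - 1)) * (1 / (n.choose i : ℝ)) := by
  classical
  have hn2 : 2 ≤ n := by omega
  have hAne : A.Nonempty := Finset.card_pos.1 (by omega)
  have hjn1 : j + 1 ≤ n := by omega
  have hIcard : ((P0 n).filter (fun B => B ⊆ A)).card = i := by rw [P0_filter_card, hA]
  have hOcard : ((P0 n).filter (fun B => ¬ B ⊆ A)).card = n - i := by
    have h := Finset.card_filter_add_card_filter_not (s := P0 n)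
      (p := fun B => B ⊆ A)
    rw [P0_card, hIcard] at h
    omega
  have hcompat0 : ∀ B ∈ P0 n, B ⊆ A ∨ Disjoint B A := by
    intro B hB
    obtain ⟨x, -, rfl⟩ := Finset.mem_image.1 hB
    by_cases hx : x ∈ A
    · exact Or.inl (Finset.singleton_subset_iff.2 hx)
    · exact Or.inr (Finset.disjoint_singleton_left.2 hx)
  have hsup0 : ∀ x ∈ A, ∃ D ∈ P0 n, D ⊆ A ∧ x ∈ D := fun x hx =>
    ⟨{x}, Finset.mem_image.2 ⟨x, Finset.mem_univ x, rfl⟩,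
      Finset.singleton_subset_iff.2 hx, Finset.mem_singleton_self x⟩
  have htot := (gh_total n (by omega) (P0 n) P0_isPart P0_card).2
  have hev0 := (gh_evcount A hAne j hj n (P0 n) P0_isPart P0_card (by omega) hcompat0 hsup0
    (by rw [hIcard]; omega) (by rw [hOcard]; omega)).2
  have hev : {c | IsGH (P0 n) c ∧ A ∈ c (j+1) ∧ A ∉ c j}.ncard = g i (n-i) j := by
    rw [hev0, hIcard, hOcard]
  clear hev0
  have hEvSet : {c | IsHistory n c ∧ JLevel A c = j}
      = {c | IsGH (P0 n) c ∧ A ∈ c (j+1) ∧ A ∉ c j} := by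
    ext c
    simp only [Set.mem_setOf_eq]
    constructor
    · rintro ⟨hc, hJ⟩
      exact ⟨isHistory_iff.1 hc, (jlevel_iff hAne hj hjn1 hc).1 hJ⟩
    · rintro ⟨hc, hE⟩
      have hist : IsHistory n c := isHistory_iff.2 hc
      exact ⟨hist, (jlevel_iff hAne hj hjn1 hist).2 hE⟩
  have hTotSet : {c : ℕ → Finset (Finset (Fin n)) | IsHistory n c}
      = {c | IsGH (P0 n) c} := by
    ext c
    exact isHistory_iff
  have hprob : histProb n (fun c => JLevel A c = j) = (g i (n-i) j : ℝ) / (W n : ℝ) := by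
    show (({c | IsHistory n c ∧ JLevel A c = j}.ncard : ℕ) : ℝ)
        / (({c : ℕ → Finset (Finset (Fin n)) | IsHistory n c}.ncard : ℕ) : ℝ)
      = (g i (n-i) j : ℝ) / (W n : ℝ)
    rw [hEvSet, hTotSet, hev, htot]
  rw [hprob, final_val hi hin hj hjn]
  exact ⟨rfl, (final_val hi hin hj hjn) ▸ final_ineq hi hin hj hjn⟩
end

section
/- In the Kingman n-coalescent, for A with |A| = i ≥ 2 and 2 ≤ k ≤ n−i, the probability that the branch supporting leaves A is formed at level k satisfies P(K_A = k) ≤ i k^2 / ((n−1)(n−2) C(n,i)). -/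
open Finset

namespace KC

variable {n : ℕ}

/-- family of nonempty pairwise disjoint blocks -/
def Fam (π : Finset (Finset (Fin n))) : Prop :=
  (∀ B ∈ π, B.Nonempty) ∧ ((π : Set (Finset (Fin n))).Pairwise fun B C => Disjoint B C)

def mergeU (s q : Finset (Finset (Fin n))) : Finset (Finset (Fin n)) :=
  s \ q ∪ {q.sup id}

def mstep (s t : Finset (Finset (Fin n))) : Prop :=
  ∃ B₁ ∈ s, ∃ B₂ ∈ s, B₁ ≠ B₂ ∧ t = s \ {B₁, B₂} ∪ {B₁ ∪ B₂}

def sing (n : ℕ) : Finset (Finset (Fin n)) :=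
  Finset.univ.image fun i => ({i} : Finset (Fin n))

lemma mem_pc2 {s q : Finset (Finset (Fin n))} :
    q ∈ s.powersetCard 2 ↔ ∃ B₁ ∈ s, ∃ B₂ ∈ s, B₁ ≠ B₂ ∧ q = {B₁, B₂} := by
  rw [mem_powersetCard]
  constructor
  · rintro ⟨hq, hc⟩
    obtain ⟨x, y, hxy, rfl⟩ := card_eq_two.1 hc
    exact ⟨x, hq (by simp), y, hq (by simp), hxy, rfl⟩
  · rintro ⟨B₁, h1, B₂, h2, hne, rfl⟩
    refine ⟨?_, card_eq_two.2 ⟨_, _, hne, rfl⟩⟩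
    intro z hz
    rcases mem_insert.1 hz with rfl | hz
    · exact h1
    · rw [mem_singleton.1 hz]; exact h2

lemma sup_pair {B₁ B₂ : Finset (Fin n)} :
    ({B₁, B₂} : Finset (Finset (Fin n))).sup id = B₁ ∪ B₂ := by
  simp [Finset.sup_insert, Finset.sup_singleton, Finset.sup_eq_union]

lemma mstep_iff {s t : Finset (Finset (Fin n))} :
    mstep s t ↔ ∃ q ∈ s.powersetCard 2, t = mergeU s q := by
  constructor
  · rintro ⟨B₁, h1, B₂, h2, hne, rfl⟩
    exact ⟨{B₁, B₂}, mem_pc2.2 ⟨B₁, h1, B₂, h2, hne, rfl⟩, by rw [mergeU, sup_pair]⟩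
  · rintro ⟨q, hq, rfl⟩
    obtain ⟨B₁, h1, B₂, h2, hne, rfl⟩ := mem_pc2.1 hq
    exact ⟨B₁, h1, B₂, h2, hne, by rw [mergeU, sup_pair]⟩

lemma sup_not_mem {s q : Finset (Finset (Fin n))} (hs : Fam s)
    (hq : q ∈ s.powersetCard 2) : q.sup id ∉ s := by
  obtain ⟨B₁, h1, B₂, h2, hne, rfl⟩ := mem_pc2.1 hq
  rw [sup_pair]
  intro hN
  obtain ⟨x, hx⟩ := hs.1 B₁ h1
  obtain ⟨y, hy⟩ := hs.1 B₂ h2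
  rcases eq_or_ne (B₁ ∪ B₂) B₁ with hEq | hne1
  · have : B₂ ⊆ B₁ := by rw [← hEq]; exact subset_union_right
    exact (Finset.disjoint_left.1 (hs.2 h1 h2 hne)) (this hy) hy
  rcases eq_or_ne (B₁ ∪ B₂) B₂ with hEq | hne2
  · have : B₁ ⊆ B₂ := by rw [← hEq]; exact subset_union_left
    exact (Finset.disjoint_left.1 (hs.2 h1 h2 hne)) hx (this hx)
  · exact (Finset.disjoint_left.1 (hs.2 hN h1 hne1)) (subset_union_left hx) hx

lemma sup_not_mem_q {s q : Finset (Finset (Fin n))} (hs : Fam s)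
    (hq : q ∈ s.powersetCard 2) : q.sup id ∉ q := by
  intro h
  exact sup_not_mem hs hq ((mem_powersetCard.1 hq).1 h)

lemma card_mergeU {s q : Finset (Finset (Fin n))} (hs : Fam s)
    (hq : q ∈ s.powersetCard 2) : (mergeU s q).card = s.card - 1 := by
  obtain ⟨hsub, hc⟩ := mem_powersetCard.1 hq
  have hN : q.sup id ∉ s \ q := fun h => sup_not_mem hs hq (mem_sdiff.1 h).1
  rw [mergeU, union_comm, ← insert_eq, card_insert_of_notMem hN, card_sdiff_of_subset hsub, hc]
  have : 2 ≤ s.card := hc ▸ card_le_card hsub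
  omega

lemma sdiff_mergeU {s q : Finset (Finset (Fin n))} (hs : Fam s)
    (hq : q ∈ s.powersetCard 2) : s \ mergeU s q = q := by
  obtain ⟨hsub, _⟩ := mem_powersetCard.1 hq
  have hN := sup_not_mem hs hq
  ext B
  simp only [mergeU, mem_sdiff, mem_union, mem_singleton, not_or]
  constructor
  · rintro ⟨hB, h1, _⟩
    by_contra hBq
    exact h1 ⟨hB, hBq⟩
  · intro hB
    refine ⟨hsub hB, fun h => h.2 hB, fun h => hN (h ▸ hsub hB)⟩

lemma mergeU_inj {s q q' : Finset (Finset (Fin n))} (hs : Fam s)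
    (hq : q ∈ s.powersetCard 2) (hq' : q' ∈ s.powersetCard 2)
    (h : mergeU s q = mergeU s q') : q = q' := by
  rw [← sdiff_mergeU hs hq, ← sdiff_mergeU hs hq', h]

lemma fam_mergeU {s q : Finset (Finset (Fin n))} (hs : Fam s)
    (hq : q ∈ s.powersetCard 2) : Fam (mergeU s q) := by
  obtain ⟨hsub, hc⟩ := mem_powersetCard.1 hq
  constructor
  · intro B hB
    rcases mem_union.1 hB with h | h
    · exact hs.1 B (mem_sdiff.1 h).1
    · obtain ⟨B₁, h1, B₂, h2, hne, rfl⟩ := mem_pc2.1 hq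
      rw [mem_singleton.1 h, sup_pair]
      obtain ⟨x, hx⟩ := hs.1 B₁ h1
      exact ⟨x, mem_union_left _ hx⟩
  · intro B hB C hC hBC
    obtain ⟨B₁, h1, B₂, h2, hne, rfl⟩ := mem_pc2.1 hq
    have key : ∀ D, D ∈ s \ {B₁, B₂} → Disjoint D (B₁ ∪ B₂) := by
      intro D hD
      have hD' := mem_sdiff.1 hD
      have hD1 : D ≠ B₁ := fun h => hD'.2 (by simp [h])
      have hD2 : D ≠ B₂ := fun h => hD'.2 (by simp [h])
      exact Finset.disjoint_union_right.2
        ⟨hs.2 hD'.1 h1 hD1, hs.2 hD'.1 h2 hD2⟩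
    simp only [mergeU, sup_pair] at hB hC
    rcases mem_union.1 hB with hB' | hB' <;> rcases mem_union.1 hC with hC' | hC'
    · exact hs.2 (mem_sdiff.1 hB').1 (mem_sdiff.1 hC').1 hBC
    · rw [mem_singleton.1 hC']; exact key B hB'
    · rw [mem_singleton.1 hB']; exact (key C hC').symm
    · exact absurd ((mem_singleton.1 hB').trans (mem_singleton.1 hC').symm) hBC

lemma finite_vanish {X : Type*} [Finite X] (z : X) (N : ℕ) (S : Set (ℕ → X))
    (h : ∀ c ∈ S, ∀ j, N < j → c j = z) : S.Finite := by
  have hinj : Set.InjOn (fun (c : ℕ → X) (j : Fin (N + 1)) => c j) S := by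
    intro c₁ h₁ c₂ h₂ he
    funext j
    rcases le_or_gt j N with hj | hj
    · exact congrFun he ⟨j, Nat.lt_succ_of_le hj⟩
    · rw [h c₁ h₁ j hj, h c₂ h₂ j hj]
  exact Set.Finite.of_finite_image (Set.toFinite _) hinj

lemma ncard_biUnion_eq {ι β : Type*} (s : Finset ι) (f : ι → Set β)
    (hfin : ∀ a ∈ s, (f a).Finite)
    (hdisj : ∀ a ∈ s, ∀ b ∈ s, a ≠ b → Disjoint (f a) (f b)) :
    (⋃ a ∈ s, f a).ncard = ∑ a ∈ s, (f a).ncard := by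
  classical
  induction s using Finset.induction_on with
  | empty => simp
  | insert _ _ ha ih =>
    rename_i a s
    rw [Finset.set_biUnion_insert, Finset.sum_insert ha]
    rw [Set.ncard_union_eq ?_ (hfin a (mem_insert_self a s)) ?_]
    · rw [ih (fun b hb => hfin b (mem_insert_of_mem hb))
        (fun b hb c hc => hdisj b (mem_insert_of_mem hb) c (mem_insert_of_mem hc))]
    · exact Set.disjoint_iUnion₂_right.2 fun b hb =>
        hdisj a (mem_insert_self a s) b (mem_insert_of_mem hb)
          (fun h => ha (h ▸ hb))
    · exact Set.Finite.biUnion s.finite_toSet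
        (fun b hb => hfin b (mem_insert_of_mem hb))


variable {n : ℕ}

/-- histories below level `m`, starting from `π` at level `m` -/
def HOn (n m : ℕ) (π : Finset (Finset (Fin n))) : Set (ℕ → Finset (Finset (Fin n))) :=
  {c | (∀ j, j = 0 ∨ m < j → c j = ∅) ∧ c m = π ∧
    ∀ j, 2 ≤ j → j ≤ m → mstep (c j) (c (j - 1))}

def Dd (m : ℕ) : ℕ := ∏ j ∈ Finset.Ioc 1 m, j.choose 2

lemma Dd_pos (m : ℕ) : 0 < Dd m := by
  refine Finset.prod_pos fun j hj => Nat.choose_pos ?_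
  exact (mem_Ioc.1 hj).1

lemma HOn_finite (m : ℕ) (π : Finset (Finset (Fin n))) : (HOn n m π).Finite :=
  finite_vanish ∅ m _ (fun c hc j hj => hc.1 j (Or.inr hj))

lemma HOn_ncard : ∀ m : ℕ, 1 ≤ m → ∀ π : Finset (Finset (Fin n)), Fam π → π.card = m →
    (HOn n m π).ncard = Dd m := by
  intro m
  induction m with
  | zero => omega
  | succ m ih =>
    intro _ π hfam hcard
    rcases Nat.eq_zero_or_pos m with rfl | hm1
    · -- level 1
      have : HOn n 1 π = {fun j => if j = 1 then π else ∅} := by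
        ext c
        simp only [HOn, Set.mem_setOf_eq, Set.mem_singleton_iff]
        constructor
        · rintro ⟨hz, h1, _⟩
          funext j
          rcases eq_or_ne j 1 with rfl | hj
          · simpa using h1
          · simp only [if_neg hj]
            exact hz j (by omega)
        · rintro rfl
          refine ⟨fun j hj => ?_, by simp, fun j h2 h1 => by omega⟩
          have : j ≠ 1 := by omega
          simp [this]
      rw [this, Set.ncard_singleton]
      simp [Dd]
    · classical
      have key : HOn n (m + 1) π =
          ⋃ q ∈ π.powersetCard 2,
            (fun c' : ℕ → Finset (Finset (Fin n)) =>
              (fun j => if j = m + 1 then π else c' j)) '' HOn n m (mergeU π q) := by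
        ext c
        simp only [Set.mem_iUnion, Set.mem_image, exists_prop]
        constructor
        · rintro ⟨hz, hm, hstep⟩
          obtain ⟨q, hq, hmerge⟩ := mstep_iff.1 (hm ▸ hstep (m + 1) (by omega) le_rfl)
          refine ⟨q, hq, fun j => if j = m + 1 then ∅ else c j, ⟨?_, ?_, ?_⟩, ?_⟩
          · intro j hj
            rcases eq_or_ne j (m + 1) with rfl | hne
            · simp
            · simp only [if_neg hne]
              exact hz j (by omega)
          · simp only [if_neg (show m ≠ m + 1 by omega)]
            simpa using hmerge
          · intro j h2 hjm
            simp only [if_neg (show j ≠ m + 1 by omega), if_neg (show j - 1 ≠ m + 1 by omega)]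
            exact hstep j h2 (by omega)
          · funext j
            rcases eq_or_ne j (m + 1) with rfl | hne
            · simpa using hm.symm
            · simp [hne]
        · rintro ⟨q, hq, c', ⟨hz, hm, hstep⟩, rfl⟩
          refine ⟨?_, by simp, ?_⟩
          · intro j hj
            have hne : j ≠ m + 1 := by omega
            simp only [if_neg hne]
            exact hz j (by omega)
          · intro j h2 hj
            rcases eq_or_ne j (m + 1) with rfl | hne
            · have e1 : (fun j => if j = m + 1 then π else c' j) (m + 1) = π := by simp
              have e2 : (fun j => if j = m + 1 then π else c' j) (m + 1 - 1) = c' m := by simp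
              rw [e1, e2, mstep_iff]
              exact ⟨q, hq, hm⟩
            · simp only [if_neg hne, if_neg (show j - 1 ≠ m + 1 by omega)]
              exact hstep j h2 (by omega)
      rw [key, ncard_biUnion_eq]
      · have heach : ∀ q ∈ π.powersetCard 2,
            ((fun c' : ℕ → Finset (Finset (Fin n)) =>
              (fun j => if j = m + 1 then π else c' j)) '' HOn n m (mergeU π q)).ncard = Dd m := by
          intro q hq
          rw [Set.ncard_image_of_injOn, ih hm1 _ (fam_mergeU hfam hq)
            (by rw [card_mergeU hfam hq, hcard]; omega)]
          intro c₁ h₁ c₂ h₂ he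
          funext j
          rcases eq_or_ne j (m + 1) with rfl | hne
          · rw [h₁.1 (m + 1) (by omega), h₂.1 (m + 1) (by omega)]
          · have := congrFun he j
            simpa [hne] using this
        rw [Finset.sum_congr rfl heach, Finset.sum_const, card_powersetCard, hcard,
          smul_eq_mul, Dd, Dd, Finset.prod_Ioc_succ_top hm1, mul_comm]
      · intro q hq
        exact Set.Finite.image _ (HOn_finite m _)
      · intro q hq q' hq' hne
        rw [Set.disjoint_left]
        rintro c ⟨c₁, h₁, rfl⟩ ⟨c₂, h₂, he⟩
        apply hne
        refine mergeU_inj hfam hq hq' ?_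
        have e1 : c₁ m = mergeU π q := h₁.2.1
        have e2 : c₂ m = mergeU π q' := h₂.2.1
        have := congrFun he m
        simp only [if_neg (show m ≠ m + 1 by omega)] at this
        rw [← e1, ← e2, this]


variable {n : ℕ}

def Pref (n m : ℕ) : Set (ℕ → Finset (Finset (Fin n))) :=
  {c | (∀ j, j < m ∨ n < j → c j = ∅) ∧ c n = sing n ∧
    ∀ j, m + 1 ≤ j → j ≤ n → mstep (c j) (c (j - 1))}

lemma Pref_finite (m : ℕ) : (Pref n m).Finite :=
  finite_vanish ∅ n _ (fun c hc j hj => hc.1 j (Or.inr hj))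

lemma fam_sing : Fam (sing n) := by
  constructor
  · intro B hB
    obtain ⟨x, -, rfl⟩ := Finset.mem_image.1 hB
    exact ⟨x, mem_singleton_self x⟩
  · intro B hB C hC hBC
    obtain ⟨x, -, rfl⟩ := Finset.mem_image.1 hB
    obtain ⟨y, -, rfl⟩ := Finset.mem_image.1 hC
    simp only [Finset.disjoint_singleton_right, mem_singleton]
    intro h
    exact hBC (by rw [h])

lemma card_sing : (sing n).card = n := by
  rw [sing, Finset.card_image_of_injective _ (fun a b h => singleton_inj.1 h)]
  simp

lemma pref_inv {m : ℕ} {c : ℕ → Finset (Finset (Fin n))} (hc : c ∈ Pref n m) :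
    ∀ j, m ≤ j → j ≤ n → Fam (c j) ∧ (c j).card = j := by
  suffices h : ∀ d j, j + d = n → m ≤ j → Fam (c j) ∧ (c j).card = j by
    intro j h1 h2
    exact h (n - j) j (by omega) h1
  intro d
  induction d with
  | zero =>
    intro j hj _
    have : j = n := by omega
    subst this
    rw [hc.2.1]
    exact ⟨fam_sing, card_sing⟩
  | succ d ih =>
    intro j hj hm
    have hup := ih (j + 1) (by omega) (by omega)
    have hstep := hc.2.2 (j + 1) (by omega) (by omega)
    simp only [Nat.add_sub_cancel] at hstep
    obtain ⟨q, hq, hmerge⟩ := mstep_iff.1 hstep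
    rw [hmerge]
    refine ⟨fam_mergeU hup.1 hq, ?_⟩
    rw [card_mergeU hup.1 hq, hup.2]
    omega

section Split

variable (A : Finset (Fin n))

def sA (π : Finset (Finset (Fin n))) : Finset (Finset (Fin n)) :=
  π.filter fun B => B ⊆ A

def Spl (r : ℕ) (π : Finset (Finset (Fin n))) : Prop :=
  (sA A π).card = r ∧ (sA A π).sup id = A

variable {A}

lemma sA_subset {π : Finset (Finset (Fin n))} : sA A π ⊆ π := filter_subset _ _

lemma spl_le {π : Finset (Finset (Fin n))} (hπ : Fam π) {r : ℕ} (h : Spl A r π) :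
    r ≤ A.card := by
  have hdisj : ∀ B ∈ sA A π, ∀ C ∈ sA A π, B ≠ C → Disjoint (id B) (id C) :=
    fun B hB C hC hBC => hπ.2 (sA_subset hB) (sA_subset hC) hBC
  have hA : A.card = ∑ B ∈ sA A π, B.card := by
    conv_lhs => rw [← h.2]
    rw [sup_eq_biUnion, card_biUnion hdisj]
    rfl
  rw [← h.1, hA]
  calc (sA A π).card = ∑ _B ∈ sA A π, 1 := by simp
  _ ≤ ∑ B ∈ sA A π, B.card := by
      refine Finset.sum_le_sum fun B hB => ?_
      have := hπ.1 B (sA_subset hB)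
      exact Finset.card_pos.2 this

variable {σ q : Finset (Finset (Fin n))}

lemma sA_merge_in (hσ : Fam σ) (hq : q ∈ σ.powersetCard 2) (hsub : q ⊆ sA A σ) :
    sA A (mergeU σ q) = (sA A σ \ q) ∪ {q.sup id} := by
  have hNA : q.sup id ⊆ A := Finset.sup_le fun B hB => (mem_filter.1 (hsub hB)).2
  ext B
  simp only [sA, mergeU, mem_filter, mem_union, mem_sdiff, mem_singleton]
  constructor
  · rintro ⟨h1 | h1, h2⟩
    · exact Or.inl ⟨⟨h1.1, h2⟩, h1.2⟩
    · exact Or.inr h1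
  · rintro (⟨⟨h1, h2⟩, h3⟩ | rfl)
    · exact ⟨Or.inl ⟨h1, h3⟩, h2⟩
    · exact ⟨Or.inr rfl, hNA⟩

lemma spl_merge_in_iff (hσ : Fam σ) (hq : q ∈ σ.powersetCard 2) (hsub : q ⊆ sA A σ)
    {r : ℕ} : Spl A r (mergeU σ q) ↔ Spl A (r + 1) σ := by
  have hN : q.sup id ∉ sA A σ \ q := fun h => sup_not_mem hσ hq (sA_subset (mem_sdiff.1 h).1)
  have hcard2 : q.card = 2 := (mem_powersetCard.1 hq).2
  have hle : 2 ≤ (sA A σ).card := hcard2 ▸ card_le_card hsub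
  have hcard : (sA A (mergeU σ q)).card = (sA A σ).card - 1 := by
    rw [sA_merge_in hσ hq hsub, union_comm, ← insert_eq, card_insert_of_notMem hN,
      card_sdiff_of_subset hsub, hcard2]
    omega
  have hsup : (sA A (mergeU σ q)).sup id = (sA A σ).sup id := by
    rw [sA_merge_in hσ hq hsub, Finset.sup_union, Finset.sup_singleton]
    conv_rhs => rw [← Finset.sdiff_union_of_subset hsub]
    rw [Finset.sup_union]
    rfl
  unfold Spl
  rw [hcard, hsup]
  constructor
  · rintro ⟨e1, e2⟩
    exact ⟨by omega, e2⟩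
  · rintro ⟨e1, e2⟩
    exact ⟨by omega, e2⟩

lemma sA_merge_out (hσ : Fam σ) (hq : q ∈ σ.powersetCard 2)
    (hout : ∀ B ∈ q, ¬B ⊆ A) : sA A (mergeU σ q) = sA A σ := by
  have hNA : ¬ q.sup id ⊆ A := by
    obtain ⟨B₁, hB₁, B₂, hB₂, hne, rfl⟩ := mem_pc2.1 hq
    rw [sup_pair]
    exact fun h => hout B₁ (by simp) (subset_union_left.trans h)
  ext B
  simp only [sA, mergeU, mem_filter, mem_union, mem_sdiff, mem_singleton]
  constructor
  · rintro ⟨h1 | rfl, h2⟩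
    · exact ⟨h1.1, h2⟩
    · exact absurd h2 hNA
  · rintro ⟨h1, h2⟩
    refine ⟨Or.inl ⟨h1, fun hBq => hout B hBq h2⟩, h2⟩

lemma spl_merge_out_iff (hσ : Fam σ) (hq : q ∈ σ.powersetCard 2)
    (hout : ∀ B ∈ q, ¬B ⊆ A) {r : ℕ} : Spl A r (mergeU σ q) ↔ Spl A r σ := by
  unfold Spl
  rw [sA_merge_out hσ hq hout]

lemma spl_merge_mixed (hσ : Fam σ) (hq : q ∈ σ.powersetCard 2)
    {B₁ B₂ : Finset (Fin n)} (hqeq : q = {B₁, B₂}) (h1 : B₁ ⊆ A) (h2 : ¬B₂ ⊆ A)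
    {r : ℕ} : ¬ Spl A r (mergeU σ q) := by
  subst hqeq
  obtain ⟨hsub, -⟩ := mem_powersetCard.1 hq
  have hB₁σ : B₁ ∈ σ := hsub (by simp)
  have hne : B₁ ≠ B₂ := fun h => h2 (h ▸ h1)
  have hNA : ¬ ({B₁, B₂} : Finset (Finset (Fin n))).sup id ⊆ A := by
    rw [sup_pair]
    intro h
    exact h2 (subset_union_right.trans h)
  have hsA : sA A (mergeU σ {B₁, B₂}) = sA A σ \ {B₁} := by
    ext B
    simp only [sA, mergeU, mem_filter, mem_union, mem_sdiff, mem_singleton]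
    constructor
    · rintro ⟨h | rfl, hBA⟩
      · refine ⟨⟨h.1, hBA⟩, ?_⟩
        intro hB1
        exact h.2 (by simp [hB1])
      · exact absurd hBA hNA
    · rintro ⟨⟨hBσ, hBA⟩, hBne⟩
      refine ⟨Or.inl ⟨hBσ, ?_⟩, hBA⟩
      intro hmem
      rcases mem_insert.1 hmem with rfl | hmem
      · exact hBne rfl
      · exact h2 ((mem_singleton.1 hmem) ▸ hBA)
  rintro ⟨-, hsup⟩
  rw [hsA] at hsup
  obtain ⟨x, hx⟩ := hσ.1 B₁ hB₁σ
  have hxA : x ∈ A := h1 hx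
  rw [← hsup] at hxA
  obtain ⟨C, hC, hxC⟩ := Finset.mem_sup.1 hxA
  obtain ⟨hCs, hCne⟩ := mem_sdiff.1 hC
  have : C ≠ B₁ := by simpa using hCne
  exact (Finset.disjoint_left.1 (hσ.2 (sA_subset hCs) hB₁σ this)) hxC hx

end Split


variable {n : ℕ} {A : Finset (Fin n)} {σ : Finset (Finset (Fin n))}

open scoped Classical in
lemma count_good (hσ : Fam σ) (r : ℕ) :
    ((σ.powersetCard 2).filter fun q => Spl A r (mergeU σ q)).card =
      if Spl A r σ then (σ.card - r).choose 2
      else if Spl A (r + 1) σ then (r + 1).choose 2 else 0 := by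
  have pair_sub : ∀ {B₁ B₂ : Finset (Fin n)}, B₁ ∈ σ → B₂ ∈ σ → B₁ ⊆ A → B₂ ⊆ A →
      ({B₁, B₂} : Finset (Finset (Fin n))) ⊆ sA A σ := by
    intro B₁ B₂ h1 h2 b1 b2 B hB
    rcases mem_insert.1 hB with rfl | hB
    · exact mem_filter.2 ⟨h1, b1⟩
    · rw [mem_singleton.1 hB]
      exact mem_filter.2 ⟨h2, b2⟩
  by_cases hsup : (sA A σ).sup id = A
  · by_cases h1 : (sA A σ).card = r
    · rw [if_pos ⟨h1, hsup⟩]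
      have key : ((σ.powersetCard 2).filter fun q => Spl A r (mergeU σ q)) =
          (σ \ sA A σ).powersetCard 2 := by
        ext q
        simp only [mem_filter]
        constructor
        · rintro ⟨hq, hspl⟩
          obtain ⟨B₁, hB₁, B₂, hB₂, hne, rfl⟩ := mem_pc2.1 hq
          by_cases b1 : B₁ ⊆ A <;> by_cases b2 : B₂ ⊆ A
          · have := ((spl_merge_in_iff hσ hq (pair_sub hB₁ hB₂ b1 b2)).1 hspl).1
            omega
          · exact absurd hspl (spl_merge_mixed hσ hq rfl b1 b2)
          · exact absurd hspl (spl_merge_mixed hσ hq (Finset.pair_comm B₁ B₂) b2 b1)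
          · refine mem_powersetCard.2 ⟨?_, (mem_powersetCard.1 hq).2⟩
            intro B hB
            rcases mem_insert.1 hB with rfl | hB
            · exact mem_sdiff.2 ⟨hB₁, fun h => b1 (mem_filter.1 h).2⟩
            · rw [mem_singleton.1 hB]
              exact mem_sdiff.2 ⟨hB₂, fun h => b2 (mem_filter.1 h).2⟩
        · intro hq'
          obtain ⟨hsub', hc⟩ := mem_powersetCard.1 hq'
          have hqσ : q ∈ σ.powersetCard 2 :=
            mem_powersetCard.2 ⟨hsub'.trans sdiff_subset, hc⟩
          have hout : ∀ B ∈ q, ¬B ⊆ A := fun B hB hBA =>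
            (mem_sdiff.1 (hsub' hB)).2 (mem_filter.2 ⟨(mem_sdiff.1 (hsub' hB)).1, hBA⟩)
          exact ⟨hqσ, (spl_merge_out_iff hσ hqσ hout).2 ⟨h1, hsup⟩⟩
      rw [key, card_powersetCard, card_sdiff_of_subset sA_subset, h1]
    · by_cases h2 : (sA A σ).card = r + 1
      · rw [if_neg (fun hS => h1 hS.1), if_pos ⟨h2, hsup⟩]
        have key : ((σ.powersetCard 2).filter fun q => Spl A r (mergeU σ q)) =
            (sA A σ).powersetCard 2 := by
          ext q
          simp only [mem_filter]
          constructor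
          · rintro ⟨hq, hspl⟩
            obtain ⟨B₁, hB₁, B₂, hB₂, hne, rfl⟩ := mem_pc2.1 hq
            by_cases b1 : B₁ ⊆ A <;> by_cases b2 : B₂ ⊆ A
            · exact mem_powersetCard.2 ⟨pair_sub hB₁ hB₂ b1 b2, (mem_powersetCard.1 hq).2⟩
            · exact absurd hspl (spl_merge_mixed hσ hq rfl b1 b2)
            · exact absurd hspl (spl_merge_mixed hσ hq (Finset.pair_comm B₁ B₂) b2 b1)
            · have hout : ∀ B ∈ ({B₁, B₂} : Finset (Finset (Fin n))), ¬B ⊆ A := by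
                intro B hB
                rcases mem_insert.1 hB with rfl | hB
                · exact b1
                · rw [mem_singleton.1 hB]; exact b2
              have := ((spl_merge_out_iff hσ hq hout).1 hspl).1
              omega
          · intro hq'
            obtain ⟨hsub', hc⟩ := mem_powersetCard.1 hq'
            have hqσ : q ∈ σ.powersetCard 2 :=
              mem_powersetCard.2 ⟨hsub'.trans sA_subset, hc⟩
            exact ⟨hqσ, (spl_merge_in_iff hσ hqσ hsub').2 ⟨h2, hsup⟩⟩
        rw [key, card_powersetCard, h2]
      · rw [if_neg (fun hS => h1 hS.1), if_neg (fun hS => h2 hS.1)]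
        rw [Finset.card_eq_zero, Finset.filter_eq_empty_iff]
        intro q hq
        obtain ⟨B₁, hB₁, B₂, hB₂, hne, rfl⟩ := mem_pc2.1 hq
        by_cases b1 : B₁ ⊆ A <;> by_cases b2 : B₂ ⊆ A
        · intro hspl
          exact h2 ((spl_merge_in_iff hσ hq (pair_sub hB₁ hB₂ b1 b2)).1 hspl).1
        · exact spl_merge_mixed hσ hq rfl b1 b2
        · exact spl_merge_mixed hσ hq (Finset.pair_comm B₁ B₂) b2 b1
        · intro hspl
          have hout : ∀ B ∈ ({B₁, B₂} : Finset (Finset (Fin n))), ¬B ⊆ A := by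
            intro B hB
            rcases mem_insert.1 hB with rfl | hB
            · exact b1
            · rw [mem_singleton.1 hB]; exact b2
          exact h1 ((spl_merge_out_iff hσ hq hout).1 hspl).1
  · rw [if_neg (fun hS => hsup hS.2), if_neg (fun hS => hsup hS.2)]
    rw [Finset.card_eq_zero, Finset.filter_eq_empty_iff]
    intro q hq
    obtain ⟨B₁, hB₁, B₂, hB₂, hne, rfl⟩ := mem_pc2.1 hq
    by_cases b1 : B₁ ⊆ A <;> by_cases b2 : B₂ ⊆ A
    · intro hspl
      exact hsup ((spl_merge_in_iff hσ hq (pair_sub hB₁ hB₂ b1 b2)).1 hspl).2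
    · exact spl_merge_mixed hσ hq rfl b1 b2
    · exact spl_merge_mixed hσ hq (Finset.pair_comm B₁ B₂) b2 b1
    · intro hspl
      have hout : ∀ B ∈ ({B₁, B₂} : Finset (Finset (Fin n))), ¬B ⊆ A := by
        intro B hB
        rcases mem_insert.1 hB with rfl | hB
        · exact b1
        · rw [mem_singleton.1 hB]; exact b2
      exact hsup ((spl_merge_out_iff hσ hq hout).1 hspl).2

open scoped Classical in
lemma count_goodE (hσ : Fam σ) :
    ((σ.powersetCard 2).filter fun q => A ∈ mergeU σ q ∧ A ∉ σ).card =
      if Spl A 2 σ then 1 else 0 := by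
  have memA : ∀ {q : Finset (Finset (Fin n))}, q ∈ σ.powersetCard 2 →
      A ∈ mergeU σ q → A ∉ σ → (A = q.sup id ∧ q ⊆ sA A σ) := by
    intro q hq hmem hAσ
    have : A = q.sup id := by
      rcases mem_union.1 hmem with h | h
      · exact absurd (mem_sdiff.1 h).1 hAσ
      · exact mem_singleton.1 h
    refine ⟨this, fun B hB => mem_filter.2 ⟨(mem_powersetCard.1 hq).1 hB, ?_⟩⟩
    rw [this]
    exact Finset.le_sup (f := id) hB
  by_cases hS : Spl A 2 σ
  · rw [if_pos hS]
    have hAσ : A ∉ σ := by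
      intro hAin
      obtain ⟨C, hC, hCA⟩ := Finset.exists_mem_ne (by rw [hS.1]; omega) A
      obtain ⟨x, hx⟩ := hσ.1 C (sA_subset hC)
      exact (Finset.disjoint_left.1 (hσ.2 (sA_subset hC) hAin hCA)) hx
        ((mem_filter.1 hC).2 hx)
    have key : ((σ.powersetCard 2).filter fun q => A ∈ mergeU σ q ∧ A ∉ σ) = {sA A σ} := by
      ext q
      simp only [mem_filter, mem_singleton]
      constructor
      · rintro ⟨hq, hmem, -⟩
        obtain ⟨-, hsub⟩ := memA hq hmem hAσ
        exact Finset.eq_of_subset_of_card_le hsub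
          (by rw [hS.1, (mem_powersetCard.1 hq).2])
      · rintro rfl
        have hq : sA A σ ∈ σ.powersetCard 2 := mem_powersetCard.2 ⟨sA_subset, hS.1⟩
        refine ⟨hq, ?_, hAσ⟩
        rw [mergeU]
        exact mem_union_right _ (mem_singleton.2 hS.2.symm)
    rw [key, card_singleton]
  · rw [if_neg hS, Finset.card_eq_zero, Finset.filter_eq_empty_iff]
    rintro q hq ⟨hmem, hAσ⟩
    obtain ⟨hsupA, hsub⟩ := memA hq hmem hAσ
    refine hS ⟨?_, ?_⟩
    · -- card: sA A σ = q
      have hsub' : sA A σ ⊆ q := by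
        intro C hC
        obtain ⟨B₁, hB₁, B₂, hB₂, hne, rfl⟩ := mem_pc2.1 hq
        obtain ⟨x, hx⟩ := hσ.1 C (sA_subset hC)
        have hxA : x ∈ A := (mem_filter.1 hC).2 hx
        rw [hsupA, sup_pair] at hxA
        rcases mem_union.1 hxA with h | h
        · rcases eq_or_ne C B₁ with rfl | hCne
          · simp
          · exact absurd h (Finset.disjoint_left.1 (hσ.2 (sA_subset hC) hB₁ hCne) hx)
        · rcases eq_or_ne C B₂ with rfl | hCne
          · simp
          · exact absurd h (Finset.disjoint_left.1 (hσ.2 (sA_subset hC) hB₂ hCne) hx)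
      rw [Finset.Subset.antisymm hsub' hsub, (mem_powersetCard.1 hq).2]
    · exact le_antisymm (Finset.sup_le fun B hB => (mem_filter.1 hB).2)
        (hsupA.le.trans (Finset.sup_mono hsub))


variable {n : ℕ}

open scoped Classical in
lemma pref_decomp (m : ℕ) (hmn : m < n)
    (Q : Finset (Finset (Fin n)) → Finset (Finset (Fin n)) → Prop) :
    {c | c ∈ Pref n m ∧ Q (c (m + 1)) (c m)}.ncard =
      ∑ u ∈ (Pref_finite (n := n) (m + 1)).toFinset,
        (((u (m + 1)).powersetCard 2).filter
          fun q => Q (u (m + 1)) (mergeU (u (m + 1)) q)).card := by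
  have key : {c | c ∈ Pref n m ∧ Q (c (m + 1)) (c m)} =
      ⋃ u ∈ (Pref_finite (n := n) (m + 1)).toFinset,
        (fun q : Finset (Finset (Fin n)) =>
          (fun j => if j = m then mergeU (u (m + 1)) q else u j)) ''
          ↑(((u (m + 1)).powersetCard 2).filter
            fun q => Q (u (m + 1)) (mergeU (u (m + 1)) q)) := by
    ext c
    simp only [Set.mem_iUnion, Set.mem_image, Set.Finite.mem_toFinset, Finset.mem_coe,
      mem_filter, exists_prop, Set.mem_setOf_eq]
    constructor
    · rintro ⟨⟨hz, hn, hstep⟩, hQ⟩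
      have hstep1 := hstep (m + 1) le_rfl (by omega)
      simp only [Nat.add_sub_cancel] at hstep1
      obtain ⟨q, hq, hmerge⟩ := mstep_iff.1 hstep1
      refine ⟨fun j => if j = m then ∅ else c j, ⟨?_, ?_, ?_⟩, q, ?_, ?_⟩
      · intro j hj
        rcases eq_or_ne j m with rfl | hne
        · simp
        · simp only [if_neg hne]
          exact hz j (by omega)
      · simp only [if_neg (show n ≠ m by omega)]
        exact hn
      · intro j hj1 hj2
        simp only [if_neg (show j ≠ m by omega), if_neg (show j - 1 ≠ m by omega)]
        exact hstep j (by omega) hj2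
      · simp only [if_neg (show m + 1 ≠ m by omega)]
        exact ⟨hq, by rwa [← hmerge]⟩
      · funext j
        rcases eq_or_ne j m with hje | hne
        · rw [hje]
          simp only [if_pos rfl, if_neg (show m + 1 ≠ m by omega)]
          exact hmerge.symm
        · simp [hne]
    · rintro ⟨u, ⟨hz, hn, hstep⟩, q, ⟨hq, hQ⟩, rfl⟩
      have hum : u m = ∅ := hz m (Or.inl (by omega))
      refine ⟨⟨?_, ?_, ?_⟩, ?_⟩
      · intro j hj
        have hne : j ≠ m := by omega
        simp only [if_neg hne]
        exact hz j (by omega)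
      · simp only [if_neg (show n ≠ m by omega)]
        exact hn
      · intro j hj1 hj2
        rcases eq_or_ne j (m + 1) with rfl | hne
        · have e1 : (fun j => if j = m then mergeU (u (m + 1)) q else u j) (m + 1)
              = u (m + 1) := by simp
          have e2 : (fun j => if j = m then mergeU (u (m + 1)) q else u j) (m + 1 - 1)
              = mergeU (u (m + 1)) q := by simp
          rw [e1, e2, mstep_iff]
          exact ⟨q, hq, rfl⟩
        · simp only [if_neg (show j ≠ m by omega), if_neg (show j - 1 ≠ m by omega)]
          exact hstep j (by omega) hj2
      · simp only [if_neg (show m + 1 ≠ m by omega), if_pos rfl]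
        exact hQ
  rw [key, ncard_biUnion_eq]
  · refine Finset.sum_congr rfl fun u hu => ?_
    rw [Set.ncard_image_of_injOn, Set.ncard_coe_finset]
    intro q₁ h₁ q₂ h₂ he
    have hfam : Fam (u (m + 1)) :=
      (pref_inv (Set.Finite.mem_toFinset _ |>.1 hu) (m + 1) le_rfl (by omega)).1
    have h₁' : q₁ ∈ (u (m + 1)).powersetCard 2 := (mem_filter.1 h₁).1
    have h₂' : q₂ ∈ (u (m + 1)).powersetCard 2 := (mem_filter.1 h₂).1
    refine mergeU_inj hfam h₁' h₂' ?_
    have := congrFun he m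
    simpa using this
  · intro u hu
    exact Set.Finite.image _ (Finset.finite_toSet _)
  · intro u hu u' hu' hne
    rw [Set.disjoint_left]
    rintro c ⟨q₁, h₁, rfl⟩ ⟨q₂, h₂, he⟩
    apply hne
    have hum : u m = ∅ := ((Set.Finite.mem_toFinset _).1 hu).1 m (Or.inl (by omega))
    have hum' : u' m = ∅ := ((Set.Finite.mem_toFinset _).1 hu').1 m (Or.inl (by omega))
    funext j
    rcases eq_or_ne j m with hje | hne'
    · rw [hje, hum, hum']
    · have := congrFun he j
      simpa [hne'] using (congrFun he j).symm

noncomputable def Pcnt (A : Finset (Fin n)) (m r : ℕ) : ℕ :=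
  {c | c ∈ Pref n m ∧ Spl A r (c m)}.ncard

open scoped Classical in
lemma pcnt_filter (A : Finset (Fin n)) (m r : ℕ) :
    Pcnt A m r =
      ((Pref_finite (n := n) m).toFinset.filter fun u => Spl A r (u m)).card := by
  rw [Pcnt, ← Set.ncard_coe_finset]
  congr 1
  ext c
  simp [Set.Finite.mem_toFinset]

open scoped Classical in
lemma Pcnt_rec (A : Finset (Fin n)) (m r : ℕ) (hmn : m < n) (hr : 1 ≤ r) :
    Pcnt A m r = (m + 1 - r).choose 2 * Pcnt A (m + 1) r
      + (r + 1).choose 2 * Pcnt A (m + 1) (r + 1) := by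
  rw [Pcnt, pref_decomp m hmn (fun _ t => Spl A r t)]
  have hval : ∀ u ∈ (Pref_finite (n := n) (m + 1)).toFinset,
      (((u (m + 1)).powersetCard 2).filter
        fun q => Spl A r (mergeU (u (m + 1)) q)).card =
      (if Spl A r (u (m + 1)) then (m + 1 - r).choose 2
        else if Spl A (r + 1) (u (m + 1)) then (r + 1).choose 2 else 0) := by
    intro u hu
    have hinv := pref_inv ((Set.Finite.mem_toFinset _).1 hu) (m + 1) le_rfl (by omega)
    rw [count_good hinv.1 r, hinv.2]
  rw [Finset.sum_congr rfl hval]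
  rw [Finset.sum_ite, Finset.sum_ite]
  simp only [Finset.sum_const, smul_eq_mul, Finset.sum_const_zero, add_zero]
  rw [pcnt_filter A (m + 1) r, pcnt_filter A (m + 1) (r + 1)]
  have hff : (((Pref_finite (n := n) (m + 1)).toFinset.filter
        fun u => ¬Spl A r (u (m + 1))).filter fun u => Spl A (r + 1) (u (m + 1))) =
      ((Pref_finite (n := n) (m + 1)).toFinset.filter fun u => Spl A (r + 1) (u (m + 1))) := by
    rw [Finset.filter_filter]
    refine Finset.filter_congr fun u hu => ?_
    constructor
    · rintro ⟨-, h⟩; exact h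
    · intro h
      exact ⟨fun h' => by have := h.1; have := h'.1; omega, h⟩
  rw [hff]
  ring

open scoped Classical in
lemma Pcnt_n (A : Finset (Fin n)) (r : ℕ) :
    Pcnt A n r = if Spl A r (sing n) then 1 else 0 := by
  have hpref : Pref n n = {fun j => if j = n then sing n else ∅} := by
    ext c
    simp only [Pref, Set.mem_setOf_eq, Set.mem_singleton_iff]
    constructor
    · rintro ⟨hz, hn, -⟩
      funext j
      rcases eq_or_ne j n with rfl | hne
      · simpa using hn
      · simp only [if_neg hne]
        exact hz j (by omega)
    · rintro rfl
      refine ⟨fun j hj => ?_, by simp, fun j h1 h2 => by omega⟩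
      have : j ≠ n := by omega
      simp [this]
  rw [Pcnt, hpref]
  by_cases h : Spl A r (sing n)
  · rw [if_pos h]
    have : {c | c ∈ ({fun j => if j = n then sing n else ∅} :
        Set (ℕ → Finset (Finset (Fin n)))) ∧ Spl A r (c n)} =
        {fun j => if j = n then sing n else ∅} := by
      ext c
      simp only [Set.mem_setOf_eq, Set.mem_singleton_iff]
      constructor
      · rintro ⟨rfl, -⟩; rfl
      · rintro rfl
        exact ⟨rfl, by simpa using h⟩
    rw [this, Set.ncard_singleton]
  · rw [if_neg h]
    have : {c | c ∈ ({fun j => if j = n then sing n else ∅} :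
        Set (ℕ → Finset (Finset (Fin n)))) ∧ Spl A r (c n)} = ∅ := by
      ext c
      simp only [Set.mem_setOf_eq, Set.mem_singleton_iff, Set.mem_empty_iff_false,
        iff_false, not_and]
      rintro rfl
      simpa using h
    rw [this, Set.ncard_empty]

lemma spl_sing {A : Finset (Fin n)} {i r : ℕ} (hA : A.card = i) (hi : 1 ≤ i) :
    Spl A r (sing n) ↔ r = i := by
  have hsA : sA A (sing n) = A.image fun x => ({x} : Finset (Fin n)) := by
    ext B
    simp only [sA, sing, mem_filter, Finset.mem_image, mem_univ, true_and]
    constructor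
    · rintro ⟨⟨x, rfl⟩, hsub⟩
      exact ⟨x, hsub (mem_singleton_self x), rfl⟩
    · rintro ⟨x, hx, rfl⟩
      exact ⟨⟨x, rfl⟩, singleton_subset_iff.2 hx⟩
  have hcard : (sA A (sing n)).card = i := by
    rw [hsA, Finset.card_image_of_injective _ (fun a b h => singleton_inj.1 h), hA]
  have hsup : (sA A (sing n)).sup id = A := by
    rw [hsA]
    ext a
    rw [Finset.mem_sup]
    constructor
    · rintro ⟨B, hB, haB⟩
      obtain ⟨x, hx, rfl⟩ := Finset.mem_image.1 hB
      rw [id, mem_singleton] at haB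
      rwa [haB]
    · intro ha
      exact ⟨{a}, Finset.mem_image.2 ⟨a, ha, rfl⟩, mem_singleton_self a⟩
  unfold Spl
  rw [hcard, hsup]
  simp [eq_comm]

lemma Pcnt_gt (A : Finset (Fin n)) (m r : ℕ) (hm : 1 ≤ m) (hmn : m ≤ n)
    (hr : A.card < r) : Pcnt A m r = 0 := by
  have hemp : {c | c ∈ Pref n m ∧ Spl A r (c m)} = ∅ := by
    rw [Set.eq_empty_iff_forall_notMem]
    rintro c ⟨hc, hspl⟩
    have hfam := (pref_inv hc m le_rfl hmn).1
    have := spl_le hfam hspl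
    omega
  rw [Pcnt, hemp, Set.ncard_empty]


/-- closed form for prefix counts -/
def g (n i m r : ℕ) : ℕ :=
  (n - m).choose (i - r) * (∏ j ∈ Finset.Ioc r i, j.choose 2)
    * (∏ j ∈ Finset.Ioc (m - r) (n - i), j.choose 2)

lemma Ioc_succ_single (a : ℕ) : Finset.Ioc a (a + 1) = {a + 1} := by
  ext x
  simp only [Finset.mem_Ioc, mem_singleton]
  omega

lemma prod_Ioc_peel {a b : ℕ} (h : a < b) (f : ℕ → ℕ) :
    ∏ j ∈ Finset.Ioc a b, f j = f (a + 1) * ∏ j ∈ Finset.Ioc (a + 1) b, f j := by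
  rw [← Finset.prod_Ioc_consecutive f (by omega : a ≤ a + 1) (by omega : a + 1 ≤ b),
    Ioc_succ_single, Finset.prod_singleton]

lemma prod_Ioc_zero {b : ℕ} (hb : 1 ≤ b) :
    ∏ j ∈ Finset.Ioc 0 b, j.choose 2 = 0 :=
  Finset.prod_eq_zero (Finset.mem_Ioc.2 ⟨by omega, hb⟩)
    (Nat.choose_eq_zero_of_lt (by omega))

lemma gB {n i m : ℕ} (hm : m < n) (hni : 1 ≤ n - i) :
    g n i m i = (m + 1 - i).choose 2 * g n i (m + 1) i := by
  unfold g
  rw [Nat.sub_self, Nat.choose_zero_right, Nat.choose_zero_right]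
  simp only [Finset.Ioc_self, Finset.prod_empty, one_mul, mul_one]
  rcases lt_or_ge m i with hmi | hmi
  · -- m < i : both sides zero
    have h1 : m - i = 0 := by omega
    have h2 : m + 1 - i ≤ 1 := by omega
    rcases Nat.lt_or_ge (m + 1 - i) 2 with h3 | h3
    · rw [h1, prod_Ioc_zero hni, Nat.choose_eq_zero_of_lt h3, zero_mul]
    · omega
  · -- i ≤ m : peel
    have hlt : m - i < n - i := by omega
    rw [prod_Ioc_peel hlt, show m - i + 1 = m + 1 - i by omega]

lemma gA {n i m r : ℕ} (hm : m < n) (hr1 : 1 ≤ r) (hri : r < i) (hni : 1 ≤ n - i) :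
    g n i m r = (m + 1 - r).choose 2 * g n i (m + 1) r
      + (r + 1).choose 2 * g n i (m + 1) (r + 1) := by
  unfold g
  have hio : m + 1 - (r + 1) = m - r := by omega
  rw [hio]
  rcases le_or_gt m r with hmr | hmr
  · -- m ≤ r : everything vanishes
    have h0 : m - r = 0 := by omega
    rw [h0, prod_Ioc_zero hni]
    have hT1 : (m + 1 - r).choose 2 = 0 := Nat.choose_eq_zero_of_lt (by omega)
    rw [hT1]
    ring
  · rcases lt_trichotomy (m - r) (n - i) with hlt | heq | hgt
    · -- generic case : Pascal + peels
      have e1 : (n - m).choose (i - r)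
          = (n - m - 1).choose (i - r - 1) + (n - m - 1).choose (i - r) := by
        rw [show n - m = (n - m - 1) + 1 by omega, show i - r = (i - r - 1) + 1 by omega]
        rw [Nat.choose_succ_succ]
        simp [Nat.succ_eq_add_one, Nat.add_sub_cancel]
      have e2 : n - (m + 1) = n - m - 1 := by omega
      have e3 : ∏ j ∈ Finset.Ioc (m - r) (n - i), j.choose 2
          = (m + 1 - r).choose 2 * ∏ j ∈ Finset.Ioc (m + 1 - r) (n - i), j.choose 2 := by
        rw [prod_Ioc_peel hlt, show m - r + 1 = m + 1 - r by omega]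
      have e4 : ∏ j ∈ Finset.Ioc r i, j.choose 2
          = (r + 1).choose 2 * ∏ j ∈ Finset.Ioc (r + 1) i, j.choose 2 := by
        rw [prod_Ioc_peel hri]
      rw [e1, e2, e3, e4, show i - (r + 1) = i - r - 1 by omega]
      ring
    · -- boundary : m - r = n - i
      have e1 : (n - m).choose (i - r) = 1 := by
        rw [show i - r = n - m by omega]
        exact Nat.choose_self _
      have e2 : (n - (m + 1)).choose (i - r) = 0 :=
        Nat.choose_eq_zero_of_lt (by omega)
      have e3 : (n - (m + 1)).choose (i - (r + 1)) = 1 := by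
        rw [show i - (r + 1) = n - (m + 1) by omega]
        exact Nat.choose_self _
      have e4 : Finset.Ioc (m - r) (n - i) = ∅ := by
        rw [heq]
        exact Finset.Ioc_self _
      have e5 : ∏ j ∈ Finset.Ioc r i, j.choose 2
          = (r + 1).choose 2 * ∏ j ∈ Finset.Ioc (r + 1) i, j.choose 2 :=
        prod_Ioc_peel hri _
      rw [e1, e2, e3, e4, e5, Finset.prod_empty]
      ring
    · -- impossible-count case : everything vanishes via choose = 0
      have e1 : (n - m).choose (i - r) = 0 := Nat.choose_eq_zero_of_lt (by omega)
      have e2 : (n - (m + 1)).choose (i - r) = 0 := Nat.choose_eq_zero_of_lt (by omega)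
      have e3 : (n - (m + 1)).choose (i - (r + 1)) = 0 :=
        Nat.choose_eq_zero_of_lt (by omega)
      rw [e1, e2, e3]
      ring

variable {n : ℕ}

lemma Pcnt_closed (A : Finset (Fin n)) {i : ℕ} (hA : A.card = i) (hi : 1 ≤ i)
    (hni : 1 ≤ n - i) :
    ∀ d m r, m = n - d → 1 ≤ m → 1 ≤ r → r ≤ i → Pcnt A m r = g n i m r := by
  intro d
  induction d with
  | zero =>
    intro m r hm hm1 hr1 hri
    have hmn : m = n := by omega
    subst hmn
    rw [Pcnt_n]
    by_cases hcase : r = i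
    · rw [if_pos ((spl_sing hA hi).2 hcase)]
      subst hcase
      simp [g, Nat.sub_self]
    · rw [if_neg (fun hs => hcase ((spl_sing hA hi).1 hs))]
      have h0 : 0 < i - r := by omega
      simp [g, Nat.sub_self, Nat.choose_eq_zero_of_lt h0]
  | succ d ih =>
    intro m r hm hm1 hr1 hri
    have hmn : m < n := by omega
    have hm1n : m + 1 = n - d := by omega
    rw [Pcnt_rec A m r hmn hr1]
    rcases eq_or_lt_of_le hri with rfl | hlt
    · rw [ih (m + 1) r hm1n (by omega) hr1 hri,
        Pcnt_gt A (m + 1) (r + 1) (by omega) (by omega) (by omega), mul_zero, add_zero]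
      exact (gB hmn hni).symm
    · rw [ih (m + 1) r hm1n (by omega) hr1 hri,
        ih (m + 1) (r + 1) hm1n (by omega) (by omega) (by omega)]
      exact (gA hmn hr1 hlt hni).symm


variable {n : ℕ}

lemma hist_pref {c : ℕ → Finset (Finset (Fin n))} (hc : IsHistory n c) :
    c ∈ Pref n 1 :=
  ⟨fun j hj => hc.1 j (by omega), hc.2.1, fun j hj1 hj2 => hc.2.2 j hj1 hj2⟩

lemma hist_fam {c : ℕ → Finset (Finset (Fin n))} (hc : IsHistory n c) {j : ℕ}
    (h1 : 1 ≤ j) (h2 : j ≤ n) : Fam (c j) :=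
  (pref_inv (hist_pref hc) j h1 h2).1

lemma superblock {c : ℕ → Finset (Finset (Fin n))} (hc : IsHistory n c) :
    ∀ d j m (B : Finset (Fin n)), B ∈ c j → j = m + d → 1 ≤ m → j ≤ n →
      ∃ B' ∈ c m, B ⊆ B' := by
  intro d
  induction d with
  | zero =>
    intro j m B hB hj _ _
    exact ⟨B, by rwa [show m = j by omega], subset_rfl⟩
  | succ d ih =>
    intro j m B hB hj hm hn
    obtain ⟨B₁, h1, B₂, h2, hne, hmerge⟩ := hc.2.2 j (by omega) hn
    have hstep : ∃ B'' ∈ c (j - 1), B ⊆ B'' := by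
      by_cases hBq : B ∈ ({B₁, B₂} : Finset (Finset (Fin n)))
      · refine ⟨B₁ ∪ B₂, ?_, ?_⟩
        · rw [hmerge]
          exact mem_union_right _ (mem_singleton_self _)
        · rcases mem_insert.1 hBq with rfl | hBq
          · exact subset_union_left
          · rw [mem_singleton.1 hBq]
            exact subset_union_right
      · refine ⟨B, ?_, subset_rfl⟩
        rw [hmerge]
        exact mem_union_left _ (mem_sdiff.2 ⟨hB, hBq⟩)
    obtain ⟨B'', hB'', hsub⟩ := hstep
    obtain ⟨B', hB', hsub'⟩ := ih (j - 1) m B'' hB'' (by omega) hm (by omega)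
    exact ⟨B', hB', hsub.trans hsub'⟩

lemma mem_level_le {c : ℕ → Finset (Finset (Fin n))} (hc : IsHistory n c)
    {B : Finset (Fin n)} {m : ℕ} (hB : B ∈ c m) : 1 ≤ m ∧ m ≤ n := by
  constructor
  · by_contra h
    have := hc.1 m (Or.inl (by omega))
    rw [this] at hB
    exact absurd hB (Finset.notMem_empty _)
  · by_contra h
    have := hc.1 m (Or.inr (by omega))
    rw [this] at hB
    exact absurd hB (Finset.notMem_empty _)

lemma klevel_iff {c : ℕ → Finset (Finset (Fin n))} (hc : IsHistory n c)
    {A : Finset (Fin n)} (hA : A.Nonempty) {k : ℕ} (hk2 : 2 ≤ k) (hkn : k + 1 ≤ n) :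
    KLevel A c = k ↔ A ∈ c k ∧ A ∉ c (k + 1) := by
  have hbdd : BddAbove {m | A ∈ c m} := by
    refine ⟨n, fun m hm => (mem_level_le hc hm).2⟩
  constructor
  · intro hK
    have hne : {m | A ∈ c m}.Nonempty := by
      by_contra h
      rw [Set.not_nonempty_iff_eq_empty] at h
      rw [KLevel, h, csSup_empty] at hK
      simp at hK
      omega
    have hmem : A ∈ c k := by
      have := Nat.sSup_mem hne hbdd
      rwa [show sSup {m | A ∈ c m} = k from hK] at this
    refine ⟨hmem, fun hmem' => ?_⟩
    have : k + 1 ≤ KLevel A c := le_csSup hbdd hmem'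
    omega
  · rintro ⟨hmem, hnot⟩
    have hupper : ∀ m, A ∈ c m → m ≤ k := by
      intro m hm
      by_contra h
      have hmn := (mem_level_le hc hm).2
      -- descend from m to k+1
      obtain ⟨B, hB, hAB⟩ := superblock hc (m - (k + 1)) m (k + 1) A hm (by omega)
        (by omega) hmn
      have hBA : A ≠ B := fun h => hnot (h ▸ hB)
      obtain ⟨B', hB', hBB'⟩ := superblock hc 1 (k + 1) k B hB (by omega) (by omega)
        (by omega)
      have hfam := hist_fam hc (show 1 ≤ k by omega) (show k ≤ n by omega)
      obtain ⟨x, hx⟩ := hA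
      have hAB' : A ⊆ B' := hAB.trans hBB'
      rcases eq_or_ne A B' with rfl | hne
      · exact hBA (Finset.Subset.antisymm hAB hBB')
      · exact (Finset.disjoint_left.1 (hfam.2 hmem hB' hne)) hx (hAB' hx)
    refine le_antisymm (csSup_le ⟨k, hmem⟩ hupper) (le_csSup hbdd hmem)

open scoped Classical in
lemma NE_glue (A : Finset (Fin n)) (k : ℕ) (hk1 : 1 ≤ k) (hkn : k + 1 ≤ n) :
    {c | IsHistory n c ∧ A ∈ c k ∧ A ∉ c (k + 1)}.ncard =
      {u | u ∈ Pref n k ∧ A ∈ u k ∧ A ∉ u (k + 1)}.ncard * Dd k := by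
  have hPfin : {u | u ∈ Pref n k ∧ A ∈ u k ∧ A ∉ u (k + 1)}.Finite :=
    Set.Finite.subset (Pref_finite k) (fun u hu => hu.1)
  have key : {c | IsHistory n c ∧ A ∈ c k ∧ A ∉ c (k + 1)} =
      ⋃ u ∈ hPfin.toFinset, (fun ℓ : ℕ → Finset (Finset (Fin n)) =>
        (fun j => if j ≤ k then ℓ j else u j)) '' HOn n k (u k) := by
    ext c
    simp only [Set.mem_iUnion, Set.mem_image, Set.Finite.mem_toFinset, Set.mem_setOf_eq,
      exists_prop]
    constructor
    · rintro ⟨hhist, hmem, hnot⟩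
      refine ⟨fun j => if j < k then ∅ else c j, ⟨⟨?_, ?_, ?_⟩, ?_, ?_⟩,
        fun j => if j ≤ k then c j else ∅, ⟨?_, ?_, ?_⟩, ?_⟩
      · intro j hj
        rcases hj with hj | hj
        · simp [hj]
        · simp only [if_neg (show ¬ j < k by omega)]
          exact hhist.1 j (Or.inr hj)
      · simp only [if_neg (show ¬ n < k by omega)]
        exact hhist.2.1
      · intro j hj1 hj2
        simp only [if_neg (show ¬ j < k by omega), if_neg (show ¬ j - 1 < k by omega)]
        exact hhist.2.2 j (by omega) hj2
      · simpa only [if_neg (show ¬ k < k by omega)] using hmem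
      · simpa only [if_neg (show ¬ k + 1 < k by omega)] using hnot
      · intro j hj
        rcases hj with hj | hj
        · simp only [if_pos (show j ≤ k by omega)]
          exact hhist.1 j (Or.inl hj)
        · simp only [if_neg (show ¬ j ≤ k by omega)]
      · simp only [if_pos le_rfl, if_neg (show ¬ k < k by omega)]
      · intro j hj1 hj2
        simp only [if_pos hj2, if_pos (by omega : j - 1 ≤ k)]
        exact hhist.2.2 j hj1 (by omega)
      · funext j
        rcases le_or_gt j k with hj | hj
        · simp only [if_pos hj]
        · simp only [if_neg (not_le.2 hj), if_neg (show ¬ j < k by omega)]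
    · rintro ⟨u, ⟨⟨huz, hun, hustep⟩, humem, hunot⟩, ℓ, ⟨hlz, hlk, hlstep⟩, rfl⟩
      refine ⟨⟨?_, ?_, ?_⟩, ?_, ?_⟩
      · intro j hj
        rcases hj with rfl | hj
        · simp only [if_pos (show 0 ≤ k by omega)]
          exact hlz 0 (Or.inl rfl)
        · simp only [if_neg (show ¬ j ≤ k by omega)]
          exact huz j (Or.inr hj)
      · simp only [if_neg (show ¬ n ≤ k by omega)]
        exact hun
      · intro j hj1 hj2
        rcases le_or_gt j k with hj | hj
        · simp only [if_pos hj, if_pos (by omega : j - 1 ≤ k)]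
          exact hlstep j hj1 hj
        · simp only [if_neg (not_le.2 hj)]
          rcases eq_or_ne j (k + 1) with rfl | hne
          · have e1 : (if k + 1 - 1 ≤ k then ℓ (k + 1 - 1) else u (k + 1 - 1)) = u k := by
              simp only [show k + 1 - 1 = k from rfl, if_pos le_rfl, hlk]
            rw [e1]
            exact hustep (k + 1) le_rfl hj2
          · simp only [if_neg (show ¬ j - 1 ≤ k by omega)]
            exact hustep j (by omega) hj2
      · simp only [if_pos le_rfl, hlk]
        exact humem
      · simpa only [if_neg (show ¬ k + 1 ≤ k by omega)] using hunot
  rw [key, ncard_biUnion_eq]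
  · have heach : ∀ u ∈ hPfin.toFinset,
        ((fun ℓ : ℕ → Finset (Finset (Fin n)) =>
          (fun j => if j ≤ k then ℓ j else u j)) '' HOn n k (u k)).ncard = Dd k := by
      intro u hu
      have hu' := (Set.Finite.mem_toFinset _).1 hu
      have hinv := pref_inv hu'.1 k le_rfl (by omega)
      rw [Set.ncard_image_of_injOn, HOn_ncard k hk1 (u k) hinv.1 hinv.2]
      intro ℓ₁ h₁ ℓ₂ h₂ he
      funext j
      rcases le_or_gt j k with hj | hj
      · have := congrFun he j
        simpa [if_pos hj] using this
      · rw [h₁.1 j (Or.inr hj), h₂.1 j (Or.inr hj)]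
    have hnc : {u | u ∈ Pref n k ∧ A ∈ u k ∧ A ∉ u (k + 1)}.ncard
        = hPfin.toFinset.card := by
      rw [← Set.ncard_coe_finset, Set.Finite.coe_toFinset]
    rw [Finset.sum_congr rfl heach, Finset.sum_const, smul_eq_mul, hnc]
  · intro u hu
    exact Set.Finite.image _ (HOn_finite k _)
  · intro u hu u' hu' hne
    have huP := ((Set.Finite.mem_toFinset _).1 hu).1
    have huP' := ((Set.Finite.mem_toFinset _).1 hu').1
    rw [Set.disjoint_left]
    rintro c ⟨ℓ₁, h₁, rfl⟩ ⟨ℓ₂, h₂, he⟩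
    apply hne
    funext j
    rcases lt_or_ge j k with hj | hj
    · rw [huP.1 j (Or.inl hj), huP'.1 j (Or.inl hj)]
    · rcases eq_or_lt_of_le hj with hje | hj'
      · rw [← hje, ← h₁.2.1, ← h₂.2.1]
        have := congrFun he k
        simpa [if_pos (le_refl k)] using this.symm
      · have := congrFun he j
        simpa [if_neg (show ¬ j ≤ k by omega)] using this.symm


variable {n : ℕ}

lemma hist_eq_HOn : {c | IsHistory n c} = HOn n n (sing n) := rfl

lemma hist_ncard (hn : 1 ≤ n) : {c | IsHistory n c}.ncard = Dd n := by
  rw [hist_eq_HOn]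
  exact HOn_ncard n hn (sing n) fam_sing card_sing

lemma NE_total (A : Finset (Fin n)) {i k : ℕ} (hA : A.card = i) (hi : 2 ≤ i)
    (hk : 2 ≤ k) (hik : i + k ≤ n) :
    {c | IsHistory n c ∧ KLevel A c = k}.ncard = g n i (k + 1) 2 * Dd k := by
  have hAne : A.Nonempty := Finset.card_pos.1 (by omega)
  have hkn : k + 1 ≤ n := by omega
  have hclosed := Pcnt_closed A hA (by omega) (by omega) (n - (k + 1)) (k + 1) 2
    (by omega) (by omega) (by omega) (by omega)
  have e1 : {c | IsHistory n c ∧ KLevel A c = k} =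
      {c | IsHistory n c ∧ A ∈ c k ∧ A ∉ c (k + 1)} := by
    ext c
    simp only [Set.mem_setOf_eq]
    constructor
    · rintro ⟨hc, hK⟩
      exact ⟨hc, (klevel_iff hc hAne hk hkn).1 hK⟩
    · rintro ⟨hc, hE⟩
      exact ⟨hc, (klevel_iff hc hAne hk hkn).2 hE⟩
  rw [e1, NE_glue A k (by omega) hkn]
  congr 1
  -- prefix event count = Pcnt A (k+1) 2
  have e2 : {u | u ∈ Pref n k ∧ A ∈ u k ∧ A ∉ u (k + 1)}.ncard
      = Pcnt A (k + 1) 2 := by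
    classical
    have := pref_decomp (n := n) k (by omega) (fun σ t => A ∈ t ∧ A ∉ σ)
    rw [this]
    have hval : ∀ u ∈ (Pref_finite (n := n) (k + 1)).toFinset,
        (@Finset.filter _ (fun q => A ∈ mergeU (u (k + 1)) q ∧ A ∉ u (k + 1))
          (fun q => Classical.propDecidable _) ((u (k + 1)).powersetCard 2)).card =
        (if Spl A 2 (u (k + 1)) then 1 else 0) := by
      intro u hu
      have humem := (Set.Finite.mem_toFinset (Pref_finite (n := n) (k + 1))).1 hu
      have hinv := pref_inv humem (k + 1) le_rfl hkn
      rw [Finset.filter_congr_decidable]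
      exact count_goodE hinv.1
    rw [pcnt_filter]
    refine Eq.trans (Finset.sum_congr rfl hval) ?_
    simp [Finset.sum_boole, Finset.filter_congr_decidable]
  rw [e2]
  exact hclosed

/-! ### arithmetic -/

lemma two_mul_choose_two (m : ℕ) : 2 * m.choose 2 = m * (m - 1) := by
  have h := Nat.descFactorial_eq_factorial_mul_choose m 2
  have h2 : m.descFactorial 2 = (m - 1) * m := by
    rw [Nat.descFactorial_succ, Nat.descFactorial_one]
  rw [h2] at h
  have h3 : (2 : ℕ).factorial = 2 := rfl
  rw [h3] at h
  rw [mul_comm m (m - 1)]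
  exact h.symm

lemma prod_in_fact : ∀ t : ℕ,
    2 ^ (t + 1) * ∏ j ∈ Finset.Ioc 2 (t + 2), j.choose 2
      = (t + 2).factorial * (t + 1).factorial := by
  intro t
  induction t with
  | zero => simp [Nat.factorial]
  | succ t ih =>
    rw [show t + 1 + 2 = (t + 2) + 1 from rfl,
      Finset.prod_Ioc_succ_top (by omega : 2 ≤ t + 2)]
    have e : (2:ℕ) ^ (t + 1 + 1) * ((∏ j ∈ Finset.Ioc 2 (t + 2), j.choose 2)
        * (t + 2 + 1).choose 2)
        = (2 ^ (t + 1) * ∏ j ∈ Finset.Ioc 2 (t + 2), j.choose 2)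
          * (2 * (t + 3).choose 2) := by ring
    rw [e, ih, two_mul_choose_two]
    rw [show (t + 3) - 1 = t + 2 from rfl]
    rw [show (t + 1 + 2) = t + 3 from rfl, show (t + 1 + 1) = t + 2 from rfl]
    rw [Nat.factorial_succ (t + 2), Nat.factorial_succ (t + 1)]
    ring

lemma prod_out_fact : ∀ t s : ℕ, t ≤ s →
    2 ^ t * ∏ j ∈ Finset.Ioc (s - t) s, j.choose 2
      = s.descFactorial t * (s - 1).descFactorial t := by
  intro t
  induction t with
  | zero => simp
  | succ t ih =>
    intro s hts
    rw [prod_Ioc_peel (show s - (t + 1) < s by omega), show s - (t + 1) + 1 = s - t by omega]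
    have e : (2:ℕ) ^ (t + 1) * ((s - t).choose 2 * ∏ j ∈ Finset.Ioc (s - t) s, j.choose 2)
        = (2 * (s - t).choose 2) * (2 ^ t * ∏ j ∈ Finset.Ioc (s - t) s, j.choose 2) := by
      ring
    rw [e, ih s (by omega), two_mul_choose_two,
      Nat.descFactorial_succ, Nat.descFactorial_succ,
      show s - t - 1 = s - 1 - t by omega]
    ring

lemma main_ineq {i k : ℕ} (hi : 2 ≤ i) (hk : 2 ≤ k) (hik : i + k ≤ n) :
    g n i (k + 1) 2 * Dd k * ((n - 1) * (n - 2) * n.choose i) ≤ i * k ^ 2 * Dd n := by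
  have hn4 : 4 ≤ n := by omega
  set Pin := ∏ j ∈ Finset.Ioc 2 i, j.choose 2 with hPin
  set Pmid := ∏ j ∈ Finset.Ioc k (n - i), j.choose 2 with hPmid
  set P4 := ∏ j ∈ Finset.Ioc (n - i) n, j.choose 2 with hP4
  have hg : g n i (k + 1) 2 = (n - k - 1).choose (i - 2) * Pin * (k.choose 2 * Pmid) := by
    rw [g, show n - (k + 1) = n - k - 1 by omega, show k + 1 - 2 = k - 1 by omega,
      prod_Ioc_peel (show k - 1 < n - i by omega), show k - 1 + 1 = k by omega]
  have hDd : Dd n = Dd k * (Pmid * P4) := by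
    rw [Dd, Dd, ← Finset.prod_Ioc_consecutive _ (show 1 ≤ k by omega) (show k ≤ n by omega),
      ← Finset.prod_Ioc_consecutive _ (show k ≤ n - i by omega) (show n - i ≤ n by omega)]
  have core : (n - k - 1).choose (i - 2) * Pin * k.choose 2
      * ((n - 1) * (n - 2) * n.choose i) ≤ i * k ^ 2 * P4 := by
    refine Nat.le_of_mul_le_mul_left ?_ (show 0 < 2 ^ i by positivity)
    have F1 : 2 ^ (i - 1) * Pin = i.factorial * (i - 1).factorial := by
      have := prod_in_fact (i - 2)
      rw [show i - 2 + 2 = i by omega, show i - 2 + 1 = i - 1 by omega] at this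
      exact this
    have F2 : 2 * k.choose 2 = k * (k - 1) := two_mul_choose_two k
    have F3 : 2 ^ i * P4 = n.descFactorial i * (n - 1).descFactorial i := by
      have := prod_out_fact i n (by omega)
      exact this
    have F4 : n.descFactorial i = i.factorial * n.choose i :=
      Nat.descFactorial_eq_factorial_mul_choose n i
    have F5a : (n - 1).descFactorial i = (n - 1) * (n - 2).descFactorial (i - 1) := by
      conv_lhs => rw [show n - 1 = (n - 2) + 1 by omega, show i = (i - 1) + 1 by omega]
      rw [Nat.succ_descFactorial_succ, show n - 2 + 1 = n - 1 by omega]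
    have F5b : (n - 2).descFactorial (i - 1)
        = (n - 2) * (n - 3).descFactorial (i - 2) := by
      conv_lhs => rw [show n - 2 = (n - 3) + 1 by omega, show i - 1 = (i - 2) + 1 by omega]
      rw [Nat.succ_descFactorial_succ, show n - 3 + 1 = n - 2 by omega]
    have F5 : (n - 1).descFactorial i
        = (n - 1) * ((n - 2) * (n - 3).descFactorial (i - 2)) := by
      rw [F5a, F5b]
    have F6 : (i - 2).factorial * (n - k - 1).choose (i - 2)
        = (n - k - 1).descFactorial (i - 2) :=
      (Nat.descFactorial_eq_factorial_mul_choose _ _).symm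
    have F7 : (i - 1).factorial = (i - 1) * (i - 2).factorial := by
      rw [show i - 1 = (i - 2) + 1 by omega, Nat.factorial_succ]
    have split2 : (2:ℕ) ^ i = 2 ^ (i - 1) * 2 := by
      rw [← pow_succ]
      congr 1
      omega
    calc 2 ^ i * ((n - k - 1).choose (i - 2) * Pin * k.choose 2
          * ((n - 1) * (n - 2) * n.choose i))
        = (2 ^ (i - 1) * Pin) * ((2 * k.choose 2)
            * ((n - k - 1).choose (i - 2) * ((n - 1) * (n - 2) * n.choose i))) := by
          rw [split2]; ring
      _ = (i.factorial * ((i - 1) * (i - 2).factorial)) * ((k * (k - 1))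
            * ((n - k - 1).choose (i - 2) * ((n - 1) * (n - 2) * n.choose i))) := by
          rw [F1, F2, F7]
      _ = (i.factorial * n.choose i * ((n - 1) * (n - 2)))
            * ((i - 1) * ((i - 2).factorial * (n - k - 1).choose (i - 2)) * (k * (k - 1))) := by
          ring
      _ = (i.factorial * n.choose i * ((n - 1) * (n - 2)))
            * ((i - 1) * (n - k - 1).descFactorial (i - 2) * (k * (k - 1))) := by
          rw [F6]
      _ ≤ (i.factorial * n.choose i * ((n - 1) * (n - 2)))
            * (i * (n - 3).descFactorial (i - 2) * (k * k)) := by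
          have hd : (n - k - 1).descFactorial (i - 2) ≤ (n - 3).descFactorial (i - 2) :=
            Nat.descFactorial_le _ (by omega)
          exact Nat.mul_le_mul_left _ (Nat.mul_le_mul (Nat.mul_le_mul
            (show i - 1 ≤ i by omega) hd) (Nat.mul_le_mul le_rfl (show k - 1 ≤ k by omega)))
      _ = i * k ^ 2 * (n.descFactorial i * (n - 1).descFactorial i) := by
          rw [F4, F5]; ring
      _ = 2 ^ i * (i * k ^ 2 * P4) := by
          rw [← F3]; ring
  calc g n i (k + 1) 2 * Dd k * ((n - 1) * (n - 2) * n.choose i)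
      = ((n - k - 1).choose (i - 2) * Pin * k.choose 2
          * ((n - 1) * (n - 2) * n.choose i)) * (Dd k * Pmid) := by
        rw [hg]; ring
    _ ≤ (i * k ^ 2 * P4) * (Dd k * Pmid) := Nat.mul_le_mul_right _ core
    _ = i * k ^ 2 * Dd n := by rw [hDd]; ring

end KC

/-- Bound on the distribution of the initial level of a branch of order `i ≥ 2`:
`P(K_A = k) ≤ i k² / ((n−1)(n−2) C(n,i))`. -/
theorem stmt7 (n i k : ℕ) (A : Finset (Fin n)) (hA : A.card = i)
    (hi : 2 ≤ i) (hk : 2 ≤ k) (hkn : k ≤ n - i) :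
    histProb n (fun c => KLevel A c = k) ≤
      i * k ^ 2 / (((n : ℝ) - 1) * ((n : ℝ) - 2) * (n.choose i : ℝ)) := by
  have hik : i + k ≤ n := by omega
  have hn1 : 1 ≤ n := by omega
  have hNH : {c | IsHistory n c}.ncard = KC.Dd n := KC.hist_ncard hn1
  have hNE : {c | IsHistory n c ∧ KLevel A c = k}.ncard
      = KC.g n i (k + 1) 2 * KC.Dd k := KC.NE_total A hA hi hk hik
  have hmain := KC.main_ineq (n := n) hi hk hik
  unfold histProb
  have hsets : {c | IsHistory n c ∧ (fun c => KLevel A c = k) c}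
      = {c | IsHistory n c ∧ KLevel A c = k} := rfl
  rw [hsets, hNE, hNH]
  have h1 : ((n : ℝ) - 1) = ((n - 1 : ℕ) : ℝ) := by
    rw [Nat.cast_sub hn1]
    norm_num
  have h2 : ((n : ℝ) - 2) = ((n - 2 : ℕ) : ℝ) := by
    rw [Nat.cast_sub (by omega)]
    norm_num
  rw [h1, h2]
  have hd1 : (0 : ℝ) < (KC.Dd n : ℝ) := by
    exact_mod_cast KC.Dd_pos n
  have hd2 : (0 : ℝ) < ((n - 1 : ℕ) : ℝ) * ((n - 2 : ℕ) : ℝ) * (n.choose i : ℝ) := by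
    have c1 : (0 : ℝ) < ((n - 1 : ℕ) : ℝ) := by
      exact_mod_cast (show 0 < n - 1 by omega)
    have c2 : (0 : ℝ) < ((n - 2 : ℕ) : ℝ) := by
      exact_mod_cast (show 0 < n - 2 by omega)
    have c3 : (0 : ℝ) < (n.choose i : ℝ) := by
      exact_mod_cast Nat.choose_pos (show i ≤ n by omega)
    positivity
  rw [div_le_div_iff₀ hd1 hd2]
  exact_mod_cast hmain
end
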